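/- arXiv:1907.01259 — 2 statements merged into one kernel-verified Lean document; each statement's English description precedes it below -/
import Mathlib

section
/- Let n ≥ 2, let S_el = { e_{i,j}(a) : 1 ≤ i < j ≤ n+1, a ∈ F_q } (indexed by triples (i,j,a)) and let π be the canonical homomorphism from the free group on S_el to Unip_{n+1}(F_q). Let R_St be the set of Steinberg relator words: (St1) e_{i,j}(a_1)·e_{i,j}(a_2)·e_{i,j}(a_1+a_2)^{-1} for all 1 ≤ i < j ≤ n+1 and a_1,a_2 ∈ F_q, and (St2) [e_{i_1,j_1}(a_1), e_{i_2,j_2}(a_2)]·r^{-1} where r = 1 if i_1 ≠ j_2 and i_2 ≠ j_1, r = e_{i_1,j_2}(a_1 a_2) if j_1 = i_2, and r = e_{i_2,j_1}(−a_1 a_2) if j_2 = i_1. Then: (i) ker π equals the normal closure of R_St in the free group on S_el; and (ii) there is a constant C depending only on n (e.g., C = 2m + 4m + ... + 2^{C(n+1,2)}m divided by m, independent of q) such that for every prime power q, every word w ∈ ker π of length at most m can be written in the free group as a product of at most C·m conjugates of elements of R_St and their inverses. -/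
section ElementaryUnits

variable {R : Type*} [CommRing R]

/-- The elementary matrix `e_{i,j}(a) = 1 + a·E_{i,j}` (`i ≠ j`) as a unit. -/
def elemUnit (n : ℕ) (i j : Fin n) (hij : i ≠ j) (a : R) : (Matrix (Fin n) (Fin n) R)ˣ where
  val := 1 + Matrix.single i j a
  inv := 1 + Matrix.single i j (-a)
  val_inv := by
    have h : Matrix.single i j a * Matrix.single i j (-a) = 0 :=
      Matrix.single_mul_single_of_ne _ i j _ hij.symm _
    have h2 : Matrix.single i j a + Matrix.single i j (-a) = 0 := by
      rw [← Matrix.single_add]; simp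
    have e : (1 + Matrix.single i j a) * (1 + Matrix.single i j (-a)) =
        1 + (Matrix.single i j a + Matrix.single i j (-a)) +
          Matrix.single i j a * Matrix.single i j (-a) := by noncomm_ring
    rw [e, h, h2, add_zero, add_zero]
  inv_val := by
    have h : Matrix.single i j (-a) * Matrix.single i j a = 0 :=
      Matrix.single_mul_single_of_ne _ i j _ hij.symm _
    have h2 : Matrix.single i j (-a) + Matrix.single i j a = 0 := by
      rw [← Matrix.single_add]; simp
    have e : (1 + Matrix.single i j (-a)) * (1 + Matrix.single i j a) =
        1 + (Matrix.single i j (-a) + Matrix.single i j a) +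
          Matrix.single i j (-a) * Matrix.single i j a := by noncomm_ring
    rw [e, h, h2, add_zero, add_zero]

end ElementaryUnits

/-- The index set of the generating set `S_el = {e_{i,j}(a) : 1 ≤ i < j ≤ n+1, a ∈ F}`. -/
abbrev ElIdx (n : ℕ) (F : Type) : Type :=
  {p : Fin (n + 1) × Fin (n + 1) × F // p.1 < p.2.1}

/-- The canonical homomorphism from the free group on `S_el` to the matrix group,
sending each generator `e_{i,j}(a)` to the corresponding elementary matrix.
Its image is `Unip_{n+1}(F)`. -/
def stPi (n : ℕ) (F : Type) [Field F] :
    FreeGroup (ElIdx n F) →* (Matrix (Fin (n + 1)) (Fin (n + 1)) F)ˣ :=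
  FreeGroup.lift fun t => elemUnit (n + 1) t.1.1 t.1.2.1 (ne_of_lt t.2) t.1.2.2

/-- The Steinberg relator words of type (St1):
`e_{i,j}(a₁)·e_{i,j}(a₂)·e_{i,j}(a₁+a₂)⁻¹`. -/
def stR1 (n : ℕ) (F : Type) [Field F] : Set (FreeGroup (ElIdx n F)) :=
  {w | ∃ (i j : Fin (n + 1)) (h : i < j) (a₁ a₂ : F),
    w = FreeGroup.of ⟨(i, j, a₁), h⟩ * FreeGroup.of ⟨(i, j, a₂), h⟩ *
      (FreeGroup.of ⟨(i, j, a₁ + a₂), h⟩)⁻¹}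

/-- The right-hand side `r` of the Steinberg commutator relation
`[e_{i₁,j₁}(a₁), e_{i₂,j₂}(a₂)] = r`. -/
def stTarget (n : ℕ) (F : Type) [Field F] (i₁ j₁ i₂ j₂ : Fin (n + 1))
    (h₁ : i₁ < j₁) (h₂ : i₂ < j₂) (a₁ a₂ : F) : FreeGroup (ElIdx n F) :=
  if h : j₁ = i₂ then FreeGroup.of ⟨(i₁, j₂, a₁ * a₂), by subst h; exact h₁.trans h₂⟩
  else if h' : j₂ = i₁ then
    FreeGroup.of ⟨(i₂, j₁, -(a₁ * a₂)), by subst h'; exact h₂.trans h₁⟩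
  else 1

open scoped commutatorElement

/-- The Steinberg relator words of type (St2): `[e_{i₁,j₁}(a₁), e_{i₂,j₂}(a₂)]·r⁻¹` where
`r = 1` if `i₁ ≠ j₂`, `i₂ ≠ j₁`; `r = e_{i₁,j₂}(a₁a₂)` if `j₁ = i₂`; and
`r = e_{i₂,j₁}(-a₁a₂)` if `j₂ = i₁`. -/
def stR2 (n : ℕ) (F : Type) [Field F] : Set (FreeGroup (ElIdx n F)) :=
  {w | ∃ (i₁ j₁ i₂ j₂ : Fin (n + 1)) (h₁ : i₁ < j₁) (h₂ : i₂ < j₂) (a₁ a₂ : F),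
    w = ⁅FreeGroup.of (⟨(i₁, j₁, a₁), h₁⟩ : ElIdx n F),
          FreeGroup.of (⟨(i₂, j₂, a₂), h₂⟩ : ElIdx n F)⁆ *
      (stTarget n F i₁ j₁ i₂ j₂ h₁ h₂ a₁ a₂)⁻¹}


namespace StDeriv

variable {G : Type*} [Group G] (R : Set G)

/-- `w` is a product of at most `k` conjugates of elements of `R ∪ R⁻¹`. -/
def derivL (k : ℕ) (w : G) : Prop :=
  ∃ L : List (G × G), L.length ≤ k ∧ (∀ p ∈ L, p.2 ∈ R ∨ p.2⁻¹ ∈ R) ∧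
    w = (L.map fun p => p.1⁻¹ * p.2 * p.1).prod

variable {R}

theorem derivL.one : derivL R 0 (1 : G) := ⟨[], by simp⟩

theorem derivL.mono {k k' : ℕ} {w : G} (h : derivL R k w) (hk : k ≤ k') : derivL R k' w := by
  obtain ⟨L, h1, h2, h3⟩ := h; exact ⟨L, h1.trans hk, h2, h3⟩

theorem derivL.of_mem {r : G} (h : r ∈ R ∨ r⁻¹ ∈ R) : derivL R 1 r :=
  ⟨[(1, r)], by simp, by simpa using h, by simp⟩

theorem derivL.mul {k k' : ℕ} {w w' : G} (h : derivL R k w) (h' : derivL R k' w') :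
    derivL R (k + k') (w * w') := by
  obtain ⟨L, h1, h2, h3⟩ := h; obtain ⟨L', h1', h2', h3'⟩ := h'
  refine ⟨L ++ L', by simpa using Nat.add_le_add h1 h1', ?_, by simp [h3, h3']⟩
  intro p hp; rcases List.mem_append.1 hp with hp | hp
  · exact h2 p hp
  · exact h2' p hp

theorem derivL.conj {k : ℕ} {w : G} (h : derivL R k w) (v : G) : derivL R k (v⁻¹ * w * v) := by
  obtain ⟨L, h1, h2, h3⟩ := h
  refine ⟨L.map fun p => (p.1 * v, p.2), by simpa using h1, ?_, ?_⟩
  · intro p hp; obtain ⟨q, hq, rfl⟩ := List.mem_map.1 hp; exact h2 q hq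
  · have : ((L.map fun p => (p.1 * v, p.2)).map fun p => p.1⁻¹ * p.2 * p.1).prod
        = ((MulAut.conj v⁻¹).toMonoidHom : G →* G) (L.map fun p => p.1⁻¹ * p.2 * p.1).prod := by
      rw [← List.prod_hom]
      simp [List.map_map, Function.comp_def, MulAut.conj, mul_assoc]
    rw [this, ← h3]
    simp [MulAut.conj, mul_assoc]

theorem derivL.inv {k : ℕ} {w : G} (h : derivL R k w) : derivL R k w⁻¹ := by
  obtain ⟨L, h1, h2, h3⟩ := h
  refine ⟨(L.map fun p => (p.1, p.2⁻¹)).reverse, by simpa using h1, ?_, ?_⟩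
  · intro p hp
    simp only [List.mem_reverse, List.mem_map] at hp
    obtain ⟨q, hq, rfl⟩ := hp
    rcases h2 q hq with hh | hh
    · exact Or.inr (by simpa using hh)
    · exact Or.inl hh
  · rw [h3, List.prod_inv_reverse]
    simp [List.map_map, Function.comp_def, mul_assoc]

variable (R) in
/-- `w` and `w'` differ by a product of at most `k` conjugates of relators. -/
def relN (k : ℕ) (w w' : G) : Prop := derivL R k (w * w'⁻¹)

theorem relN.refl (w : G) : relN R 0 w w := by
  unfold relN; rw [mul_inv_cancel]; exact derivL.one

theorem relN.symm {k} {w w' : G} (h : relN R k w w') : relN R k w' w := by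
  have := h.inv; simpa [relN, mul_inv_rev] using this

theorem relN.trans {k k'} {w w' w'' : G} (h : relN R k w w') (h' : relN R k' w' w'') :
    relN R (k + k') w w'' := by
  have := h.mul h'
  simpa [relN, mul_assoc] using this

theorem relN.mono {k k'} {w w' : G} (h : relN R k w w') (hk : k ≤ k') : relN R k' w w' :=
  derivL.mono h hk

theorem relN.mul_right {k} {w w' : G} (h : relN R k w w') (v : G) :
    relN R k (w * v) (w' * v) := by
  have : w * v * (w' * v)⁻¹ = w * w'⁻¹ := by group
  unfold relN; rw [this]; exact h

theorem relN.mul_left {k} {w w' : G} (h : relN R k w w') (v : G) :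
    relN R k (v * w) (v * w') := by
  unfold relN
  have h3 : v * w * (v * w')⁻¹ = v⁻¹⁻¹ * (w * w'⁻¹) * v⁻¹ := by group
  rw [h3]
  exact h.conj v⁻¹

theorem relN.mul {k k'} {a b c d : G} (h : relN R k a b) (h' : relN R k' c d) :
    relN R (k + k') (a * c) (b * d) :=
  (h.mul_right c).trans (h'.mul_left b)

theorem relN.of_rel {w w' : G} (h : w * w'⁻¹ ∈ R ∨ (w * w'⁻¹)⁻¹ ∈ R) : relN R 1 w w' :=
  derivL.of_mem h

theorem relN.derivable {k} {w : G} (h : relN R k w 1) : derivL R k w := by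
  simpa [relN] using h

end StDeriv

namespace StDeriv

variable {n : ℕ} {F : Type} [Field F]

/-- Abbreviation for the generator `e_{i,j}(a)`. -/
def gen (i j : Fin (n + 1)) (h : i < j) (a : F) : FreeGroup (ElIdx n F) :=
  FreeGroup.of ⟨(i, j, a), h⟩

/-- The set of Steinberg relators. -/
def Rst (n : ℕ) (F : Type) [Field F] : Set (FreeGroup (ElIdx n F)) := stR1 n F ∪ stR2 n F

theorem rel_add (i j : Fin (n + 1)) (h : i < j) (a b : F) :
    relN (Rst n F) 1 (gen i j h a * gen i j h b) (gen i j h (a + b)) := by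
  refine relN.of_rel (Or.inl (Or.inl ⟨i, j, h, a, b, rfl⟩))

theorem rel_zero (i j : Fin (n + 1)) (h : i < j) :
    relN (Rst n F) 1 (gen i j h (0 : F)) 1 := by
  refine relN.of_rel (Or.inl (Or.inl ⟨i, j, h, 0, 0, ?_⟩))
  have : (0 : F) + 0 = 0 := by ring
  rw [this]
  simp [gen]

theorem rel_inv (i j : Fin (n + 1)) (h : i < j) (a : F) :
    relN (Rst n F) 2 ((gen i j h a)⁻¹) (gen i j h (-a)) := by
  have h1 : relN (Rst n F) 1 (gen i j h a * gen i j h (-a)) (gen i j h 0) := by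
    have := rel_add i j h a (-a); rwa [add_neg_cancel a] at this
  have h2 : relN (Rst n F) 2 (gen i j h a * gen i j h (-a)) 1 := h1.trans (rel_zero i j h)
  have h3 := h2.mul_left ((gen i j h a)⁻¹)
  have e1 : (gen i j h a)⁻¹ * (gen i j h a * gen i j h (-a)) = gen i j h (-a) := by group
  rw [e1, mul_one] at h3
  exact h3.symm

theorem rel_comm {i₁ j₁ i₂ j₂ : Fin (n + 1)} (h₁ : i₁ < j₁) (h₂ : i₂ < j₂)
    (hc1 : j₁ ≠ i₂) (hc2 : j₂ ≠ i₁) (a b : F) :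
    relN (Rst n F) 1 (gen i₁ j₁ h₁ a * gen i₂ j₂ h₂ b) (gen i₂ j₂ h₂ b * gen i₁ j₁ h₁ a) := by
  refine relN.of_rel (Or.inl (Or.inr ⟨i₁, j₁, i₂, j₂, h₁, h₂, a, b, ?_⟩))
  rw [stTarget, dif_neg hc1, dif_neg hc2]
  unfold gen
  group

theorem rel_swap {i₁ j₁ i₂ j₂ : Fin (n + 1)} (h₁ : i₁ < j₁) (h₂ : i₂ < j₂)
    (hc : j₁ = i₂) (b a : F) :
    relN (Rst n F) 1 (gen i₁ j₁ h₁ b * gen i₂ j₂ h₂ a)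
      (gen i₁ j₂ (lt_of_lt_of_le h₁ (le_of_lt (hc ▸ h₂))) (b * a) *
        (gen i₂ j₂ h₂ a * gen i₁ j₁ h₁ b)) := by
  refine relN.of_rel (Or.inl (Or.inr ⟨i₁, j₁, i₂, j₂, h₁, h₂, b, a, ?_⟩))
  rw [stTarget, dif_pos hc]
  unfold gen
  group

end StDeriv

namespace StDeriv

variable {n : ℕ} {F : Type} [Field F]

/-- The word for one column: product of `e_{i,j}(f i)` for `i` in the list `L` (only `i < j`). -/
def colWordAux (j : Fin (n + 1)) (f : Fin (n + 1) → F) (L : List (Fin (n + 1))) :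
    FreeGroup (ElIdx n F) :=
  (L.map fun i => if h : i < j then gen i j h (f i) else 1).prod

def colWord (j : Fin (n + 1)) (f : Fin (n + 1) → F) : FreeGroup (ElIdx n F) :=
  colWordAux j f (List.finRange (n + 1))

theorem colWordAux_congr {j : Fin (n + 1)} {f g : Fin (n + 1) → F} {L : List (Fin (n + 1))}
    (h : ∀ i ∈ L, f i = g i) : colWordAux j f L = colWordAux j g L := by
  unfold colWordAux
  congr 1
  refine List.map_congr_left fun i hi => ?_
  by_cases hij : i < j
  · rw [dif_pos hij, dif_pos hij, h i hi]
  · rw [dif_neg hij, dif_neg hij]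

theorem colWordAux_append (j : Fin (n + 1)) (f : Fin (n + 1) → F) (L L' : List (Fin (n + 1))) :
    colWordAux j f (L ++ L') = colWordAux j f L * colWordAux j f L' := by
  unfold colWordAux; rw [List.map_append, List.prod_append]

theorem merge_aux (j : Fin (n + 1)) (i : Fin (n + 1)) (hij : i < j) (b : F) :
    ∀ (L : List (Fin (n + 1))), i ∈ L → L.Nodup → ∀ (f : Fin (n + 1) → F),
    relN (Rst n F) L.length (colWordAux j f L * gen i j hij b)
      (colWordAux j (Function.update f i (f i + b)) L) := by
  intro L
  induction L using List.reverseRecOn with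
  | nil => intro hmem; exact absurd hmem (List.not_mem_nil)
  | append_singleton L t IH =>
    intro hmem hnd f
    rw [colWordAux_append]
    have hndL : L.Nodup := (List.nodup_append.1 hnd).1
    by_cases ht : t = i
    · subst ht
      have hiL : t ∉ L := by
        have := List.nodup_append.1 hnd
        intro hc
        exact this.2.2 t hc t (List.mem_singleton_self t) rfl
      have e1 : colWordAux j f [t] = gen t j hij (f t) := by
        unfold colWordAux; simp [dif_pos hij]
      rw [e1]
      have h1 : relN (Rst n F) 1 (gen t j hij (f t) * gen t j hij b) (gen t j hij (f t + b)) :=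
        rel_add t j hij (f t) b
      have h2 := (h1.mul_left (colWordAux j f L)).mono (by omega : 1 ≤ L.length + 1)
      have e2 : colWordAux j (Function.update f t (f t + b)) (L ++ [t]) =
          colWordAux j f L * gen t j hij (f t + b) := by
        rw [colWordAux_append]
        congr 1
        · exact colWordAux_congr fun i' hi' => Function.update_of_ne (fun hc : i' = t => hiL (by rw [hc] at hi'; exact hi')) _ f
        · unfold colWordAux; simp [dif_pos hij]
      rw [e2]
      have e3 : colWordAux j f L * gen t j hij (f t) * gen t j hij b =
          colWordAux j f L * (gen t j hij (f t) * gen t j hij b) := by group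
      rw [e3]
      simpa [List.length_append] using h2
    · have hiL : i ∈ L := by
        rcases List.mem_append.1 hmem with h | h
        · exact h
        · exact absurd (List.mem_singleton.1 h).symm ht
      by_cases htj : t < j
      · have e1 : colWordAux j f [t] = gen t j htj (f t) := by
          unfold colWordAux; simp [dif_pos htj]
        rw [e1]
        -- commute gen t j (f t) with gen i j b
        have hcomm : relN (Rst n F) 1 (gen t j htj (f t) * gen i j hij b)
            (gen i j hij b * gen t j htj (f t)) :=
          rel_comm htj hij (fun hc => absurd (hc ▸ hij) (lt_irrefl j)) (ne_of_gt htj) (f t) b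
        have h1 := hcomm.mul_left (colWordAux j f L)
        have h2 := ((IH hiL hndL f).mul_right (gen t j htj (f t)))
        have e4 : colWordAux j (Function.update f i (f i + b)) (L ++ [t]) =
            colWordAux j (Function.update f i (f i + b)) L * gen t j htj (f t) := by
          rw [colWordAux_append]
          congr 1
          unfold colWordAux
          simp [dif_pos htj, Function.update_of_ne ht]
        rw [e4]
        have e5 : colWordAux j f L * (gen t j htj (f t) * gen i j hij b) =
            colWordAux j f L * gen t j htj (f t) * gen i j hij b := by group
        have e6 : colWordAux j f L * (gen i j hij b * gen t j htj (f t)) =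
            colWordAux j f L * gen i j hij b * gen t j htj (f t) := by group
        rw [e5] at h1; rw [e6] at h1
        have := h1.trans h2
        simpa [List.length_append, Nat.add_comm] using this
      · have e1 : colWordAux j f [t] = 1 := by
          unfold colWordAux; simp [dif_neg htj]
        have e4 : colWordAux j (Function.update f i (f i + b)) (L ++ [t]) =
            colWordAux j (Function.update f i (f i + b)) L := by
          rw [colWordAux_append]
          have : colWordAux j (Function.update f i (f i + b)) [t] = 1 := by
            unfold colWordAux; simp [dif_neg htj]
          rw [this, mul_one]
        rw [e1, e4, mul_one]
        exact (IH hiL hndL f).mono (by simp)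

theorem merge_one (j : Fin (n + 1)) (i : Fin (n + 1)) (hij : i < j) (b : F)
    (f : Fin (n + 1) → F) :
    relN (Rst n F) (n + 1) (colWord j f * gen i j hij b)
      (colWord j (Function.update f i (f i + b))) := by
  have := merge_aux j i hij b (List.finRange (n + 1)) (List.mem_finRange i)
    (List.nodup_finRange (n + 1)) f
  simpa [colWord, List.length_finRange] using this

end StDeriv

namespace StDeriv

variable {n : ℕ} {F : Type} [Field F]

/-- Cost of moving a letter of row `≤ iN` past a list of length `len`. -/
def mC : ℕ → ℕ → ℕ
  | _, 0 => 0
  | 0, len + 1 => mC 0 len + 1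
  | iN + 1, len + 1 => mC (iN + 1) len + mC iN len + 1

/-- Number of spawned column letters. -/
def sC : ℕ → ℕ → ℕ
  | _, 0 => 1
  | 0, len + 1 => sC 0 len
  | iN + 1, len + 1 => sC (iN + 1) len + sC iN len

@[simp] theorem mC_zero (iN : ℕ) : mC iN 0 = 0 := by cases iN <;> rfl

@[simp] theorem sC_zero (iN : ℕ) : sC iN 0 = 1 := by cases iN <;> rfl

theorem mC_succ_len (iN len : ℕ) : mC iN len + 1 ≤ mC iN (len + 1) := by
  cases iN <;> simp [mC]

theorem mC_le_succ_len (iN len : ℕ) : mC iN len ≤ mC iN (len + 1) :=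
  le_trans (Nat.le_succ _) (mC_succ_len iN len)

theorem sC_le_succ_len (iN len : ℕ) : sC iN len ≤ sC iN (len + 1) := by
  cases iN <;> simp [sC]

theorem mC_mono_iN : ∀ len iN, mC iN len ≤ mC (iN + 1) len := by
  intro len
  induction len with
  | zero => intro iN; simp
  | succ len IH =>
    intro iN
    cases iN with
    | zero => have := IH 0; simp only [mC]; omega
    | succ k => have h1 := IH (k + 1); have h2 := IH k; simp only [mC]; omega

theorem mC_mono_iN' {iN iN' : ℕ} (h : iN ≤ iN') (len : ℕ) : mC iN len ≤ mC iN' len := by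
  induction iN' with
  | zero =>
    have : iN = 0 := by omega
    rw [this]
  | succ k IH =>
    rcases Nat.lt_or_ge iN (k + 1) with hl | hg
    · exact le_trans (IH (by omega)) (mC_mono_iN len k)
    · have : iN = k + 1 := by omega
      rw [this]

theorem sC_mono_iN : ∀ len iN, sC iN len ≤ sC (iN + 1) len := by
  intro len
  induction len with
  | zero => intro iN; simp
  | succ len IH =>
    intro iN
    cases iN with
    | zero => have := IH 0; simp only [sC]; omega
    | succ k => have h1 := IH (k + 1); have h2 := IH k; simp only [sC]; omega

theorem sC_mono_iN' {iN iN' : ℕ} (h : iN ≤ iN') (len : ℕ) : sC iN len ≤ sC iN' len := by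
  induction iN' with
  | zero =>
    have : iN = 0 := by omega
    rw [this]
  | succ k IH =>
    rcases Nat.lt_or_ge iN (k + 1) with hl | hg
    · exact le_trans (IH (by omega)) (sC_mono_iN len k)
    · have : iN = k + 1 := by omega
      rw [this]

/-- Moving a generator `e_{i,j}(a)` from the right of a product of letters of columns `< j`
to the left, spawning letters of column `j`. -/
theorem move : ∀ (iN : ℕ) (i j : Fin (n + 1)) (hij : i < j), (i : ℕ) ≤ iN → ∀ (a : F)
    (l : List (FreeGroup (ElIdx n F))),
    (∀ x ∈ l, x = 1 ∨ ∃ (i' j' : Fin (n + 1)) (h' : i' < j') (b : F), j' < j ∧ x = gen i' j' h' b) →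
    ∃ m : List (FreeGroup (ElIdx n F)),
      m.length ≤ sC iN l.length ∧
      (∀ x ∈ m, ∃ (i' : Fin (n + 1)) (h' : i' < j) (b : F), x = gen i' j h' b) ∧
      relN (Rst n F) (mC iN l.length) (l.prod * gen i j hij a) (m.prod * l.prod) := by
  intro iN
  induction iN using Nat.strong_induction_on with
  | _ iN IHs =>
    intro i j hij hi a l
    induction l using List.reverseRecOn with
    | nil =>
      intro _
      refine ⟨[gen i j hij a], by simp, ?_, ?_⟩
      · intro x hx
        rw [List.mem_singleton] at hx
        exact ⟨i, hij, a, hx⟩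
      · simp only [List.prod_nil, List.prod_cons, one_mul, mul_one, List.length_nil, mC_zero]
        exact relN.refl _
    | append_singleton l h IHl =>
      intro hl
      simp only [List.length_append, List.length_singleton]
      have hll : ∀ x ∈ l, x = 1 ∨ ∃ (i' j' : Fin (n + 1)) (h' : i' < j') (b : F),
          j' < j ∧ x = gen i' j' h' b := fun x hx => hl x (List.mem_append_left _ hx)
      rcases hl h (List.mem_append_right _ (List.mem_singleton_self h)) with h1 | hgen
      · -- h = 1
        obtain ⟨m, hm1, hm2, hm3⟩ := IHl hll
        refine ⟨m, le_trans hm1 (sC_le_succ_len _ _), hm2, ?_⟩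
        have e : (l ++ [h]).prod = l.prod := by rw [List.prod_append, h1]; simp
        rw [e]
        exact hm3.mono (mC_le_succ_len _ _)
      · obtain ⟨i', j', h', b, hj'j, rfl⟩ := hgen
        have eprod : (l ++ [gen i' j' h' b]).prod = l.prod * gen i' j' h' b := by
          rw [List.prod_append]; simp
        by_cases hspawn : j' = i
        · -- spawn case
          have hipos : 1 ≤ (i : ℕ) := by
            have h1 : (i' : ℕ) < (j' : ℕ) := h'
            have h2 : (j' : ℕ) = (i : ℕ) := by rw [hspawn]
            omega
          obtain ⟨k, rfl⟩ : ∃ k, iN = k + 1 := ⟨iN - 1, by omega⟩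
          have hi'j : i' < j := lt_trans (lt_of_lt_of_le h' (le_of_eq hspawn)) hij
          set s := gen i' j hi'j (b * a) with hs
          have hkey : (i' : ℕ) < k + 1 := by
            have h1 : (i' : ℕ) < (j' : ℕ) := h'
            have h2 : (j' : ℕ) = (i : ℕ) := by rw [hspawn]
            omega
          obtain ⟨m₂, hm₂1, hm₂2, hm₂3⟩ := IHs (i' : ℕ) hkey i' j hi'j (le_refl _) (b * a) l hll
          obtain ⟨m₁, hm₁1, hm₁2, hm₁3⟩ := IHl hll
          refine ⟨m₂ ++ m₁, ?_, ?_, ?_⟩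
          · rw [List.length_append]
            have e1 : sC (k + 1) (l.length + 1) = sC (k + 1) l.length + sC k l.length := rfl
            have e2 : sC (i' : ℕ) l.length ≤ sC k l.length := sC_mono_iN' (by omega) _
            omega
          · intro x hx
            rcases List.mem_append.1 hx with hx | hx
            · exact hm₂2 x hx
            · exact hm₁2 x hx
          · have hswap := (rel_swap h' hij hspawn b a).mul_left l.prod
            -- the `s` in rel_swap has a different (irrelevant) proof; they are equal
            rw [eprod]
            have e0 : l.prod * gen i' j' h' b * gen i j hij a =
                l.prod * (gen i' j' h' b * gen i j hij a) := by group
            rw [e0]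
            have e1 : l.prod * (gen i' j (lt_of_lt_of_le h' (le_of_lt (hspawn ▸ hij))) (b * a) *
                (gen i j hij a * gen i' j' h' b)) =
                (l.prod * s) * (gen i j hij a * gen i' j' h' b) := by
              rw [hs]; unfold gen; group
            rw [e1] at hswap
            have step2 := hm₂3.mul_right (gen i j hij a * gen i' j' h' b)
            have e2 : m₂.prod * l.prod * (gen i j hij a * gen i' j' h' b) =
                m₂.prod * (l.prod * gen i j hij a * gen i' j' h' b) := by group
            rw [e2] at step2
            have step3 := ((hm₁3.mul_right (gen i' j' h' b)).mul_left m₂.prod)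
            have chain := (hswap.trans step2).trans step3
            have efin : m₂.prod * (m₁.prod * l.prod * gen i' j' h' b) =
                (m₂ ++ m₁).prod * (l.prod * gen i' j' h' b) := by
              rw [List.prod_append]; group
            rw [efin] at chain
            refine chain.mono ?_
            have e3 : mC (k + 1) (l.length + 1) = mC (k + 1) l.length + mC k l.length + 1 := rfl
            have e4 : mC (i' : ℕ) l.length ≤ mC k l.length := mC_mono_iN' (by omega) _
            omega
        · -- commute case
          obtain ⟨m, hm1, hm2, hm3⟩ := IHl hll
          refine ⟨m, le_trans hm1 (sC_le_succ_len _ _), hm2, ?_⟩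
          have hcomm : relN (Rst n F) 1 (gen i' j' h' b * gen i j hij a)
              (gen i j hij a * gen i' j' h' b) :=
            rel_comm h' hij hspawn (fun hc => absurd ((hc ▸ h').trans hj'j) (lt_irrefl j)) b a
          have s1 := hcomm.mul_left l.prod
          have s2 := hm3.mul_right (gen i' j' h' b)
          rw [eprod]
          have e1 : l.prod * gen i' j' h' b * gen i j hij a =
              l.prod * (gen i' j' h' b * gen i j hij a) := by group
          have e2 : l.prod * (gen i j hij a * gen i' j' h' b) =
              l.prod * gen i j hij a * gen i' j' h' b := by group
          rw [e1]
          have e3 : m.prod * l.prod * gen i' j' h' b = m.prod * (l.prod * gen i' j' h' b) := by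
            group
          rw [e2] at s1
          rw [e3] at s2
          exact ((s1.trans s2).mono (by have := mC_succ_len iN l.length; omega))

end StDeriv

namespace StDeriv

variable {n : ℕ} {F : Type} [Field F]

/-- The list of letters for columns `< k`, in descending column order. -/
def lowList : ℕ → (Fin (n + 1) → Fin (n + 1) → F) → List (FreeGroup (ElIdx n F))
  | 0, _ => []
  | k + 1, A =>
    (if h : k < n + 1 then
      (List.finRange (n + 1)).map fun i =>
        if h' : i < (⟨k, h⟩ : Fin (n + 1)) then gen i ⟨k, h⟩ h' (A i ⟨k, h⟩) else 1
    else []) ++ lowList k A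

def nfUpTo (k : ℕ) (A : Fin (n + 1) → Fin (n + 1) → F) : FreeGroup (ElIdx n F) :=
  (lowList k A).prod

def nfWord (A : Fin (n + 1) → Fin (n + 1) → F) : FreeGroup (ElIdx n F) :=
  nfUpTo (n + 1) A

theorem nfUpTo_succ (k : ℕ) (h : k < n + 1) (A : Fin (n + 1) → Fin (n + 1) → F) :
    nfUpTo (k + 1) A = colWord ⟨k, h⟩ (fun i => A i ⟨k, h⟩) * nfUpTo k A := by
  have e : lowList (k + 1) A = ((List.finRange (n + 1)).map fun i =>
      if h' : i < (⟨k, h⟩ : Fin (n + 1)) then gen i ⟨k, h⟩ h' (A i ⟨k, h⟩) else 1) ++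
      lowList k A := by
    simp only [lowList]; rw [dif_pos h]
  rw [nfUpTo, e, List.prod_append]
  rfl

theorem lowList_mem {k : ℕ} {A : Fin (n + 1) → Fin (n + 1) → F} :
    ∀ x ∈ lowList k A, x = 1 ∨ ∃ (i' j' : Fin (n + 1)) (h' : i' < j'),
      (j' : ℕ) < k ∧ x = gen i' j' h' (A i' j') := by
  induction k with
  | zero => intro x hx; exact absurd hx (List.not_mem_nil)
  | succ k IH =>
    intro x hx
    unfold lowList at hx
    rcases List.mem_append.1 hx with hx | hx
    · by_cases h : k < n + 1
      · rw [dif_pos h] at hx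
        obtain ⟨i, _, rfl⟩ := List.mem_map.1 hx
        by_cases h' : i < (⟨k, h⟩ : Fin (n + 1))
        · rw [dif_pos h']
          exact Or.inr ⟨i, ⟨k, h⟩, h', by simp, rfl⟩
        · rw [dif_neg h']; exact Or.inl rfl
      · rw [dif_neg h] at hx; exact absurd hx (List.not_mem_nil)
    · rcases IH x hx with h1 | ⟨i', j', h', hj', he⟩
      · exact Or.inl h1
      · exact Or.inr ⟨i', j', h', by omega, he⟩

theorem lowList_length {k : ℕ} (A : Fin (n + 1) → Fin (n + 1) → F) :
    (lowList k A).length ≤ k * (n + 1) := by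
  induction k with
  | zero => simp [lowList]
  | succ k IH =>
    unfold lowList
    rw [List.length_append]
    have h1 : (if h : k < n + 1 then
        (List.finRange (n + 1)).map fun i =>
          if h' : i < (⟨k, h⟩ : Fin (n + 1)) then gen i ⟨k, h⟩ h' (A i ⟨k, h⟩) else 1
      else ([] : List (FreeGroup (ElIdx n F)))).length ≤ n + 1 := by
      by_cases h : k < n + 1
      · rw [dif_pos h]; simp
      · rw [dif_neg h]; simp
    have := IH
    have e : (k + 1) * (n + 1) = k * (n + 1) + (n + 1) := by ring
    omega

theorem lowList_congr {k : ℕ} {A A' : Fin (n + 1) → Fin (n + 1) → F}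
    (h : ∀ (i j : Fin (n + 1)), (j : ℕ) < k → A i j = A' i j) :
    lowList k A = lowList k A' := by
  induction k with
  | zero => rfl
  | succ k IH =>
    unfold lowList
    congr 1
    · by_cases hk : k < n + 1
      · rw [dif_pos hk, dif_pos hk]
        refine List.map_congr_left fun i _ => ?_
        by_cases h' : i < (⟨k, hk⟩ : Fin (n + 1))
        · rw [dif_pos h', dif_pos h', h i ⟨k, hk⟩ (by simp)]
        · rw [dif_neg h', dif_neg h']
      · rw [dif_neg hk, dif_neg hk]
    · exact IH fun i j hj => h i j (by omega)

/-- Merging a list of column-`j` letters into the column word. -/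
theorem merge_many (j : Fin (n + 1)) :
    ∀ (m : List (FreeGroup (ElIdx n F))),
      (∀ x ∈ m, ∃ (i' : Fin (n + 1)) (h' : i' < j) (b : F), x = gen i' j h' b) →
      ∀ f : Fin (n + 1) → F, ∃ f' : Fin (n + 1) → F,
        relN (Rst n F) (m.length * (n + 1)) (colWord j f * m.prod) (colWord j f') := by
  intro m
  induction m with
  | nil => intro _ f; exact ⟨f, by simpa using relN.refl (colWord j f)⟩
  | cons x m IH =>
    intro hm f
    obtain ⟨i', h', b, rfl⟩ := hm x (List.mem_cons_self)
    have hm' : ∀ y ∈ m, ∃ (i' : Fin (n + 1)) (h' : i' < j) (b : F), y = gen i' j h' b :=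
      fun y hy => hm y (List.mem_cons_of_mem _ hy)
    have h1 := merge_one j i' h' b f
    obtain ⟨f', hf'⟩ := IH hm' (Function.update f i' (f i' + b))
    have h2 := h1.mul_right m.prod
    have e1 : colWord j f * (gen i' j h' b * m.prod) =
        colWord j f * gen i' j h' b * m.prod := by group
    refine ⟨f', ?_⟩
    have chain := (h2.trans hf')
    rw [List.prod_cons, e1]
    refine chain.mono ?_
    simp only [List.length_cons]
    ring_nf
    omega

/-- The per-letter cost constant. -/
def stepC (n : ℕ) : ℕ := mC n ((n + 1) * (n + 1)) + sC n ((n + 1) * (n + 1)) * (n + 1)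

theorem mC_mono_len (iN : ℕ) : ∀ {len len' : ℕ}, len ≤ len' → mC iN len ≤ mC iN len' := by
  intro len len' h
  induction h with
  | refl => exact le_refl _
  | step h IH => exact le_trans IH (mC_le_succ_len _ _)

theorem sC_mono_len (iN : ℕ) : ∀ {len len' : ℕ}, len ≤ len' → sC iN len ≤ sC iN len' := by
  intro len len' h
  induction h with
  | refl => exact le_refl _
  | step h IH => exact le_trans IH (sC_le_succ_len _ _)

/-- The step lemma: multiplying a normal form by a generator on the right. -/
theorem stepNf : ∀ (k : ℕ), k ≤ n + 1 → ∀ (A : Fin (n + 1) → Fin (n + 1) → F)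
    (i j : Fin (n + 1)) (hij : i < j), (j : ℕ) < k → ∀ (a : F),
    ∃ A', (∀ (i' j' : Fin (n + 1)), j' ≠ j → A' i' j' = A i' j') ∧
      relN (Rst n F) (stepC n) (nfUpTo k A * gen i j hij a) (nfUpTo k A') := by
  intro k
  induction k with
  | zero => intro _ _ _ j _ hj; omega
  | succ k IH =>
    intro hk A i j hij hj a
    have hkn : k < n + 1 := by omega
    rw [nfUpTo_succ k hkn]
    by_cases hjk : (j : ℕ) < k
    · obtain ⟨A', hA'1, hA'2⟩ := IH (by omega) A i j hij hjk a
      refine ⟨A', hA'1, ?_⟩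
      have e1 : colWord ⟨k, hkn⟩ (fun i' => A i' ⟨k, hkn⟩) * nfUpTo k A * gen i j hij a =
          colWord ⟨k, hkn⟩ (fun i' => A i' ⟨k, hkn⟩) * (nfUpTo k A * gen i j hij a) := by group
      rw [e1, nfUpTo_succ k hkn]
      have ecol : colWord ⟨k, hkn⟩ (fun i' => A' i' ⟨k, hkn⟩) =
          colWord ⟨k, hkn⟩ (fun i' => A i' ⟨k, hkn⟩) := by
        congr 1
        funext i'
        exact hA'1 i' ⟨k, hkn⟩ (by intro hc; rw [← hc] at hjk; simp at hjk)
      rw [ecol]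
      exact hA'2.mul_left _
    · -- j = k
      have hjek : (j : ℕ) = k := by omega
      have hjeq : (⟨k, hkn⟩ : Fin (n + 1)) = j := by
        apply Fin.ext; simp [hjek]
      subst hjeq
      -- move the generator past the lower columns
      obtain ⟨m, hm1, hm2, hm3⟩ := move n i ⟨k, hkn⟩ hij (by omega) a (lowList k A)
        (fun x hx => by
          rcases lowList_mem x hx with h1 | ⟨i', j', h', hj', he⟩
          · exact Or.inl h1
          · exact Or.inr ⟨i', j', h', A i' j', ⟨by
              -- j' < ⟨k, hkn⟩
              exact (by simpa [Fin.lt_def, hjek] using hj' : j' < (⟨k, hkn⟩ : Fin (n+1))), he⟩⟩)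
      -- merge the spawned letters
      obtain ⟨f', hf'⟩ := merge_many ⟨k, hkn⟩ m hm2 (fun i' => A i' ⟨k, hkn⟩)
      set jf : Fin (n + 1) := ⟨k, hkn⟩
      set A' : Fin (n + 1) → Fin (n + 1) → F :=
        fun i' j' => if j' = jf then f' i' else A i' j' with hA'
      refine ⟨A', fun i' j' hne => by simp [hA', if_neg hne]; intro hc; exact absurd hc hne, ?_⟩
      have s1 := hm3.mul_left (colWord jf (fun i' => A i' jf))
      have s2 := hf'.mul_right (lowList k A).prod
      have e1 : colWord jf (fun i' => A i' jf) * (nfUpTo k A) * gen i jf hij a =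
          colWord jf (fun i' => A i' jf) * ((lowList k A).prod * gen i jf hij a) := by
        unfold nfUpTo; group
      rw [e1]
      have e2 : colWord jf (fun i' => A i' jf) * (m.prod * (lowList k A).prod) =
          colWord jf (fun i' => A i' jf) * m.prod * (lowList k A).prod := by group
      rw [e2] at s1
      have chain := s1.trans s2
      rw [nfUpTo_succ k hkn]
      have ecol2 : colWord jf (fun i' => A' i' jf) = colWord jf f' := by
        congr 1; funext i'; simp [hA']
      have elow : nfUpTo k A' = nfUpTo k A := by
        unfold nfUpTo
        rw [lowList_congr (fun i' j' hj' => ?_)]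
        simp only [hA']
        rw [if_neg]
        intro hc; rw [hc] at hj'; simp [jf] at hj'
      rw [ecol2, elow]
      refine chain.mono ?_
      have c1 : mC n (lowList k A).length ≤ mC n ((n + 1) * (n + 1)) :=
        mC_mono_len n (le_trans (lowList_length A) (by nlinarith))
      have c2 : m.length * (n + 1) ≤ sC n ((n + 1) * (n + 1)) * (n + 1) := by
        have : m.length ≤ sC n ((n + 1) * (n + 1)) :=
          le_trans hm1 (sC_mono_len n (le_trans (lowList_length A) (by nlinarith)))
        exact Nat.mul_le_mul_right _ this
      unfold stepC
      omega

end StDeriv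

namespace StDeriv

variable {n : ℕ} {F : Type} [Field F]

local notation "std" => Matrix.single

theorem pi_gen (i j : Fin (n + 1)) (h : i < j) (a : F) :
    stPi n F (gen i j h a) = elemUnit (n + 1) i j (ne_of_lt h) a :=
  FreeGroup.lift_apply_of

theorem elem_val (i j : Fin (n + 1)) (h : i ≠ j) (a : F) :
    (elemUnit (n + 1) i j h a).val = 1 + std i j a := rfl

theorem elem_mul_add (i j : Fin (n + 1)) (h : i < j) (a b : F) :
    elemUnit (n + 1) i j (ne_of_lt h) a * elemUnit (n + 1) i j (ne_of_lt h) b =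
      elemUnit (n + 1) i j (ne_of_lt h) (a + b) := by
  apply Units.ext
  rw [Units.val_mul]
  show (1 + std i j a) * (1 + std i j b) = 1 + std i j (a+b)
  have hz : std i j a * std i j b = 0 :=
    Matrix.single_mul_single_of_ne a i j _ (ne_of_gt h) b
  have e : (1 + std i j a) * (1 + std i j b) =
      1 + (std i j a + std i j b) + std i j a * std i j b := by noncomm_ring
  rw [e, hz, add_zero, Matrix.single_add]

theorem relator_ker {r : FreeGroup (ElIdx n F)} (hr : r ∈ Rst n F) : stPi n F r = 1 := by
  rcases hr with hr | hr
  · obtain ⟨i, j, h, a, b, rfl⟩ := hr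
    rw [show (FreeGroup.of (⟨(i, j, a), h⟩ : ElIdx n F)) = gen i j h a from rfl,
      show (FreeGroup.of (⟨(i, j, b), h⟩ : ElIdx n F)) = gen i j h b from rfl,
      show (FreeGroup.of (⟨(i, j, a + b), h⟩ : ElIdx n F)) = gen i j h (a + b) from rfl]
    rw [map_mul, map_mul, map_inv, pi_gen i j h a, pi_gen i j h b, pi_gen i j h (a + b),
      elem_mul_add i j h a b, mul_inv_cancel]
  · obtain ⟨i₁, j₁, i₂, j₂, h₁, h₂, a, b, rfl⟩ := hr
    rw [show (FreeGroup.of (⟨(i₁, j₁, a), h₁⟩ : ElIdx n F)) = gen i₁ j₁ h₁ a from rfl,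
      show (FreeGroup.of (⟨(i₂, j₂, b), h₂⟩ : ElIdx n F)) = gen i₂ j₂ h₂ b from rfl]
    rw [commutatorElement_def, map_mul, map_mul, map_mul, map_mul, map_inv, map_inv, map_inv,
      pi_gen i₁ j₁ h₁ a, pi_gen i₂ j₂ h₂ b]
    by_cases hc1 : j₁ = i₂
    · subst hc1
      rw [stTarget, dif_pos rfl]
      rw [show (FreeGroup.of (⟨(i₁, j₂, a * b), h₁.trans h₂⟩ : ElIdx n F)) =
        gen i₁ j₂ (h₁.trans h₂) (a * b) from rfl, pi_gen i₁ j₂ (h₁.trans h₂) (a * b)]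
      have key : elemUnit (n + 1) i₁ j₁ (ne_of_lt h₁) a * elemUnit (n + 1) j₁ j₂ (ne_of_lt h₂) b =
          elemUnit (n + 1) i₁ j₂ (ne_of_lt (h₁.trans h₂)) (a * b) *
            (elemUnit (n + 1) j₁ j₂ (ne_of_lt h₂) b * elemUnit (n + 1) i₁ j₁ (ne_of_lt h₁) a) := by
        apply Units.ext
        rw [Units.val_mul, Units.val_mul, Units.val_mul]; simp only [elem_val]
        have f1 : std i₁ j₁ a * std j₁ j₂ b = std i₁ j₂ (a * b) :=
          Matrix.single_mul_single_same a i₁ j₁ j₂ b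
        have f2 : std j₁ j₂ b * std i₁ j₁ a = 0 :=
          Matrix.single_mul_single_of_ne b j₁ j₂ _ (ne_of_gt (h₁.trans h₂)) a
        have f3 : std i₁ j₂ (a * b) * std j₁ j₂ b = 0 :=
          Matrix.single_mul_single_of_ne (a * b) i₁ j₂ _ (ne_of_gt h₂) b
        have f4 : std i₁ j₂ (a * b) * std i₁ j₁ a = 0 :=
          Matrix.single_mul_single_of_ne (a * b) i₁ j₂ _ (ne_of_gt (h₁.trans h₂)) a
        have lhs : (1 + std i₁ j₁ a) * (1 + std j₁ j₂ b) =
            1 + std i₁ j₁ a + std j₁ j₂ b + std i₁ j₁ a * std j₁ j₂ b := by noncomm_ring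
        have rhs : (1 + std i₁ j₂ (a * b)) * ((1 + std j₁ j₂ b) * (1 + std i₁ j₁ a)) =
            1 + std i₁ j₁ a + std j₁ j₂ b + std i₁ j₂ (a * b)
            + std j₁ j₂ b * std i₁ j₁ a
            + std i₁ j₂ (a * b) * std j₁ j₂ b + std i₁ j₂ (a * b) * std i₁ j₁ a
            + std i₁ j₂ (a * b) * (std j₁ j₂ b * std i₁ j₁ a) := by noncomm_ring
        rw [lhs, rhs, f1, f2, f3, f4]
        simp
      rw [key]
      group
    · by_cases hc2 : j₂ = i₁
      · subst hc2
        rw [stTarget, dif_neg hc1, dif_pos rfl]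
        rw [show (FreeGroup.of (⟨(i₂, j₁, -(a * b)), h₂.trans h₁⟩ : ElIdx n F)) =
          gen i₂ j₁ (h₂.trans h₁) (-(a * b)) from rfl, pi_gen i₂ j₁ (h₂.trans h₁) (-(a * b))]
        have key : elemUnit (n + 1) j₂ j₁ (ne_of_lt h₁) a * elemUnit (n + 1) i₂ j₂ (ne_of_lt h₂) b =
            elemUnit (n + 1) i₂ j₁ (ne_of_lt (h₂.trans h₁)) (-(a * b)) *
              (elemUnit (n + 1) i₂ j₂ (ne_of_lt h₂) b * elemUnit (n + 1) j₂ j₁ (ne_of_lt h₁) a) := by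
          apply Units.ext
          rw [Units.val_mul, Units.val_mul, Units.val_mul]; simp only [elem_val]
          have f1 : std j₂ j₁ a * std i₂ j₂ b = 0 :=
            Matrix.single_mul_single_of_ne a j₂ j₁ _ hc1 b
          have f2 : std i₂ j₂ b * std j₂ j₁ a = std i₂ j₁ (b * a) :=
            Matrix.single_mul_single_same b i₂ j₂ j₁ a
          have f3 : std i₂ j₁ (-(a * b)) * std i₂ j₂ b = 0 :=
            Matrix.single_mul_single_of_ne (-(a * b)) i₂ j₁ _ (ne_of_gt (h₂.trans h₁)) b
          have f4 : std i₂ j₁ (-(a * b)) * std j₂ j₁ a = 0 :=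
            Matrix.single_mul_single_of_ne (-(a * b)) i₂ j₁ _ (ne_of_gt h₁) a
          have f5 : std i₂ j₁ (-(a * b)) * std i₂ j₁ (b * a) = 0 :=
            Matrix.single_mul_single_of_ne (-(a * b)) i₂ j₁ _ (ne_of_gt (h₂.trans h₁)) (b * a)
          have lhs : (1 + std j₂ j₁ a) * (1 + std i₂ j₂ b) =
              1 + std j₂ j₁ a + std i₂ j₂ b + std j₂ j₁ a * std i₂ j₂ b := by noncomm_ring
          have rhs : (1 + std i₂ j₁ (-(a * b))) * ((1 + std i₂ j₂ b) * (1 + std j₂ j₁ a)) =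
              1 + std j₂ j₁ a + std i₂ j₂ b + std i₂ j₂ b * std j₂ j₁ a
              + std i₂ j₁ (-(a * b))
              + std i₂ j₁ (-(a * b)) * std i₂ j₂ b + std i₂ j₁ (-(a * b)) * std j₂ j₁ a
              + std i₂ j₁ (-(a * b)) * (std i₂ j₂ b * std j₂ j₁ a) := by noncomm_ring
          rw [lhs, rhs, f1, f2, f3, f4, f5]
          have f6 : std i₂ j₁ (b * a) + std i₂ j₁ (-(a * b)) = 0 := by
            rw [← Matrix.single_add]
            have : b * a + -(a * b) = 0 := by ring
            rw [this]
            simp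
          have : (1 : Matrix (Fin (n+1)) (Fin (n+1)) F) + std j₂ j₁ a + std i₂ j₂ b +
              std i₂ j₁ (b * a) + std i₂ j₁ (-(a * b)) + 0 + 0 + 0 =
              1 + std j₂ j₁ a + std i₂ j₂ b + (std i₂ j₁ (b * a) + std i₂ j₁ (-(a * b))) := by
            abel
          rw [this, f6]
        rw [key]
        group
      · rw [stTarget, dif_neg hc1, dif_neg hc2, map_one]
        have key : elemUnit (n + 1) i₁ j₁ (ne_of_lt h₁) a * elemUnit (n + 1) i₂ j₂ (ne_of_lt h₂) b =
            elemUnit (n + 1) i₂ j₂ (ne_of_lt h₂) b * elemUnit (n + 1) i₁ j₁ (ne_of_lt h₁) a := by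
          apply Units.ext
          rw [Units.val_mul, Units.val_mul]; simp only [elem_val]
          have f1 : std i₁ j₁ a * std i₂ j₂ b = 0 :=
            Matrix.single_mul_single_of_ne a i₁ j₁ _ hc1 b
          have f2 : std i₂ j₂ b * std i₁ j₁ a = 0 :=
            Matrix.single_mul_single_of_ne b i₂ j₂ _ hc2 a
          have lhs : (1 + std i₁ j₁ a) * (1 + std i₂ j₂ b) =
              1 + std i₁ j₁ a + std i₂ j₂ b + std i₁ j₁ a * std i₂ j₂ b := by noncomm_ring
          have rhs : (1 + std i₂ j₂ b) * (1 + std i₁ j₁ a) =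
              1 + std i₁ j₁ a + std i₂ j₂ b + std i₂ j₂ b * std i₁ j₁ a := by noncomm_ring
          rw [lhs, rhs, f1, f2]
        rw [key]
        group

end StDeriv

namespace StDeriv

variable {n : ℕ} {F : Type} [Field F]

local notation "std" => Matrix.single

theorem derivL_ker {k : ℕ} {w : FreeGroup (ElIdx n F)} (h : derivL (Rst n F) k w) :
    stPi n F w = 1 := by
  obtain ⟨L, _, h2, rfl⟩ := h
  rw [map_list_prod]
  refine List.prod_eq_one fun x hx => ?_
  rw [List.map_map] at hx
  obtain ⟨p, hp, rfl⟩ := List.mem_map.1 hx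
  have hr : stPi n F p.2 = 1 := by
    rcases h2 p hp with hh | hh
    · exact relator_ker hh
    · have := relator_ker hh
      rw [map_inv, inv_eq_one] at this
      exact this
  simp [map_mul, map_inv, hr]

theorem relN_pi {k : ℕ} {w w' : FreeGroup (ElIdx n F)} (h : relN (Rst n F) k w w') :
    stPi n F w = stPi n F w' := by
  have h1 : stPi n F (w * w'⁻¹) = 1 := derivL_ker h
  rw [map_mul, map_inv] at h1
  exact (mul_inv_eq_one).1 h1

theorem pi_colWordAux (j : Fin (n + 1)) (f : Fin (n + 1) → F) :
    ∀ L : List (Fin (n + 1)), (stPi n F (colWordAux j f L)).val =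
      1 + (L.map fun i => if i < j then std i j (f i) else 0).sum := by
  intro L
  induction L with
  | nil => simp [colWordAux]
  | cons i L IH =>
    have e : colWordAux j f (i :: L) =
        (if h : i < j then gen i j h (f i) else 1) * colWordAux j f L := by
      simp [colWordAux]
    rw [e, map_mul, Units.val_mul, IH, List.map_cons, List.sum_cons]
    by_cases h : i < j
    · rw [dif_pos h, if_pos h, pi_gen i j h (f i)]
      simp only [elem_val]
      have hz : std i j (f i) * (L.map fun i' => if i' < j then std i' j (f i') else 0).sum = 0 := by
        rw [← List.sum_map_mul_left]
        refine List.sum_eq_zero fun x hx => ?_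
        obtain ⟨b, _, rfl⟩ := List.mem_map.1 hx
        by_cases hb : b < j
        · rw [if_pos hb]
          exact Matrix.single_mul_single_of_ne (f i) i j _ (ne_of_gt hb) (f b)
        · rw [if_neg hb, mul_zero]
      have e2 : (1 + std i j (f i)) *
          (1 + (L.map fun i' => if i' < j then std i' j (f i') else 0).sum) =
          1 + (std i j (f i) + (L.map fun i' => if i' < j then std i' j (f i') else 0).sum) +
          std i j (f i) * (L.map fun i' => if i' < j then std i' j (f i') else 0).sum := by
        noncomm_ring
      rw [e2, hz, add_zero]
    · rw [dif_neg h, if_neg h, map_one, Units.val_one, one_mul, zero_add]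

theorem pi_colWord (j : Fin (n + 1)) (f : Fin (n + 1) → F) :
    (stPi n F (colWord j f)).val = 1 + ∑ i, if i < j then std i j (f i) else 0 := by
  rw [show colWord j f = colWordAux j f (List.finRange (n + 1)) from rfl, pi_colWordAux,
    Fin.sum_univ_def]

/-- The strictly-upper part with columns `< k`. -/
def lowMat (k : ℕ) (A : Fin (n + 1) → Fin (n + 1) → F) : Matrix (Fin (n + 1)) (Fin (n + 1)) F :=
  ∑ p : Fin (n + 1) × Fin (n + 1),
    if p.1 < p.2 ∧ (p.2 : ℕ) < k then std p.1 p.2 (A p.1 p.2) else 0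

theorem pi_nfUpTo (A : Fin (n + 1) → Fin (n + 1) → F) :
    ∀ k, k ≤ n + 1 → (stPi n F (nfUpTo k A)).val = 1 + lowMat k A := by
  intro k
  induction k with
  | zero =>
    intro _
    have e : nfUpTo 0 A = 1 := rfl
    have e2 : lowMat 0 A = 0 := by
      refine Finset.sum_eq_zero fun p _ => ?_
      rw [if_neg]; rintro ⟨_, hc⟩; omega
    rw [e, map_one, Units.val_one, e2, add_zero]
  | succ k IH =>
    intro hk
    have hkn : k < n + 1 := by omega
    rw [nfUpTo_succ k hkn, map_mul, Units.val_mul, pi_colWord, IH (by omega)]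
    set C : Matrix (Fin (n + 1)) (Fin (n + 1)) F :=
      ∑ i, if i < (⟨k, hkn⟩ : Fin (n + 1)) then std i (⟨k, hkn⟩ : Fin (n + 1)) (A i ⟨k, hkn⟩)
        else 0 with hC
    have hz : C * lowMat k A = 0 := by
      rw [hC, lowMat, Finset.sum_mul]
      refine Finset.sum_eq_zero fun i _ => ?_
      rw [Finset.mul_sum]
      refine Finset.sum_eq_zero fun p _ => ?_
      by_cases h1 : i < (⟨k, hkn⟩ : Fin (n + 1))
      · rw [if_pos h1]
        by_cases h2 : p.1 < p.2 ∧ (p.2 : ℕ) < k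
        · rw [if_pos h2]
          refine Matrix.single_mul_single_of_ne _ _ _ _ ?_ _
          have hval : (p.1 : ℕ) < k := by
            have := h2.1
            have h3 : (p.1 : ℕ) < (p.2 : ℕ) := this
            omega
          intro hc
          rw [← hc] at hval
          simp at hval
        · rw [if_neg h2, mul_zero]
      · rw [if_neg h1, zero_mul]
    have hsum : lowMat (k + 1) A = C + lowMat k A := by
      have hterm : ∀ p : Fin (n + 1) × Fin (n + 1),
          (if p.1 < p.2 ∧ (p.2 : ℕ) < k + 1 then std p.1 p.2 (A p.1 p.2) else 0) =
          (if p.1 < p.2 ∧ (p.2 : ℕ) = k then std p.1 p.2 (A p.1 p.2) else 0) +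
          (if p.1 < p.2 ∧ (p.2 : ℕ) < k then std p.1 p.2 (A p.1 p.2) else 0) := by
        intro p
        by_cases h1 : p.1 < p.2
        · by_cases h2 : (p.2 : ℕ) = k
          · rw [if_pos ⟨h1, by omega⟩, if_pos ⟨h1, h2⟩, if_neg (by rintro ⟨_, hc⟩; omega),
              add_zero]
          · by_cases h3 : (p.2 : ℕ) < k
            · rw [if_pos ⟨h1, by omega⟩, if_neg (by rintro ⟨_, hc⟩; omega), if_pos ⟨h1, h3⟩,
                zero_add]
            · rw [if_neg (by rintro ⟨_, hc⟩; omega), if_neg (by rintro ⟨_, hc⟩; omega),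
                if_neg (by rintro ⟨_, hc⟩; omega), add_zero]
        · rw [if_neg (by rintro ⟨hc, _⟩; exact h1 hc), if_neg (by rintro ⟨hc, _⟩; exact h1 hc),
            if_neg (by rintro ⟨hc, _⟩; exact h1 hc), add_zero]
      rw [lowMat, lowMat, Finset.sum_congr rfl (fun p _ => hterm p), Finset.sum_add_distrib]
      congr 1
      rw [hC, Fintype.sum_prod_type]
      refine Finset.sum_congr rfl fun i _ => ?_
      rw [Finset.sum_eq_single (⟨k, hkn⟩ : Fin (n + 1))]
      · by_cases h : i < (⟨k, hkn⟩ : Fin (n + 1))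
        · rw [if_pos ⟨h, by simp⟩, if_pos h]
        · rw [if_neg (by rintro ⟨hc, _⟩; exact h hc), if_neg h]
      · intro jj _ hjj
        rw [if_neg]
        rintro ⟨_, hc⟩
        exact hjj (Fin.ext (by simpa using hc))
      · intro hmem
        exact absurd (Finset.mem_univ _) hmem
    have e2 : (1 + C) * (1 + lowMat k A) =
        1 + (C + lowMat k A) + C * lowMat k A := by noncomm_ring
    rw [e2, hz, add_zero, hsum]

theorem nf_entry_zero (A : Fin (n + 1) → Fin (n + 1) → F)
    (hpi : stPi n F (nfWord A) = 1) (i j : Fin (n + 1)) (hij : i < j) : A i j = 0 := by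
  have h1 : (stPi n F (nfWord A)).val = 1 + lowMat (n + 1) A :=
    pi_nfUpTo A (n + 1) (le_refl _)
  rw [hpi, Units.val_one] at h1
  have h2 : lowMat (n + 1) A = 0 := by
    have := h1.symm
    rwa [add_eq_left] at this
  have h3 : lowMat (n + 1) A i j = 0 := by rw [h2]; rfl
  rw [lowMat, Matrix.sum_apply] at h3
  rw [Finset.sum_eq_single (i, j)] at h3
  · rw [if_pos ⟨hij, j.isLt⟩] at h3
    simpa using h3
  · intro p _ hp
    by_cases hc : p.1 < p.2 ∧ (p.2 : ℕ) < n + 1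
    · rw [if_pos hc]
      refine Matrix.single_apply_of_ne _ _ _ _ _ ?_
      rintro ⟨hc1, hc2⟩
      exact hp (Prod.ext hc1 hc2)
    · rw [if_neg hc]; rfl
  · intro hmem
    exact absurd (Finset.mem_univ _) hmem

theorem rel_ones : ∀ l : List (FreeGroup (ElIdx n F)),
    (∀ x ∈ l, x = 1 ∨ ∃ (i j : Fin (n + 1)) (h : i < j), x = gen i j h (0 : F)) →
    relN (Rst n F) l.length l.prod 1 := by
  intro l
  induction l with
  | nil => intro _; simpa using relN.refl (1 : FreeGroup (ElIdx n F))
  | cons x l IH =>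
    intro hl
    have hx := hl x (List.mem_cons_self)
    have hrest := IH fun y hy => hl y (List.mem_cons_of_mem _ hy)
    rw [List.prod_cons, List.length_cons]
    rcases hx with rfl | ⟨i, j, h, rfl⟩
    · rw [one_mul]
      exact hrest.mono (by omega)
    · have := (rel_zero i j h).mul hrest
      rw [mul_one] at this
      exact this.mono (by omega)

theorem nfWord_zero_rel (A : Fin (n + 1) → Fin (n + 1) → F)
    (hA : ∀ (i j : Fin (n + 1)), i < j → A i j = 0) :
    relN (Rst n F) ((n + 1) * (n + 1)) (nfWord A) 1 := by
  have h := rel_ones (lowList (n + 1) A) (fun x hx => by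
    rcases lowList_mem x hx with h1 | ⟨i', j', h', _, he⟩
    · exact Or.inl h1
    · refine Or.inr ⟨i', j', h', ?_⟩
      rw [he, hA i' j' h'])
  have hlen := lowList_length (k := n + 1) A
  exact (h.mono hlen)

end StDeriv

namespace StDeriv

variable {n : ℕ} {F : Type} [Field F]

theorem mk_eq_prod (L : List (ElIdx n F × Bool)) :
    FreeGroup.mk L = (L.map fun x => cond x.2 (FreeGroup.of x.1) (FreeGroup.of x.1)⁻¹).prod := by
  have h := FreeGroup.lift_mk (f := FreeGroup.of) (L := L)
  rwa [FreeGroup.lift_of_eq_id, MonoidHom.id_apply] at h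

theorem reduce_list :
    ∀ L : List (ElIdx n F × Bool), ∃ A : Fin (n + 1) → Fin (n + 1) → F,
      relN (Rst n F) ((stepC n + 2) * L.length + (n + 1) * (n + 1))
        ((L.map fun x => cond x.2 (FreeGroup.of x.1) (FreeGroup.of x.1)⁻¹).prod) (nfWord A) := by
  intro L
  induction L using List.reverseRecOn with
  | nil =>
    refine ⟨fun _ _ => 0, ?_⟩
    have h := (nfWord_zero_rel (n := n) (fun _ _ => (0 : F)) (fun _ _ _ => rfl)).symm
    simpa using h.mono (by omega)
  | append_singleton L x IHl =>
    obtain ⟨A, hA⟩ := IHl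
    obtain ⟨⟨⟨i, j, a⟩, hij⟩, bb⟩ := x
    have hj : (j : ℕ) < n + 1 := j.isLt
    rw [List.map_append, List.prod_append, List.length_append]
    simp only [List.map_cons, List.map_nil, List.prod_cons, List.prod_nil, mul_one,
      List.length_cons, List.length_nil]
    cases bb with
    | true =>
      obtain ⟨A', _, hstep⟩ := stepNf (n + 1) (le_refl _) A i j hij hj a
      refine ⟨A', ?_⟩
      have h1 := hA.mul_right (FreeGroup.of (⟨(i, j, a), hij⟩ : ElIdx n F))
      have h2 : relN (Rst n F) (stepC n) (nfWord A * gen i j hij a) (nfWord A') := hstep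
      rw [show (FreeGroup.of (⟨(i, j, a), hij⟩ : ElIdx n F)) = gen i j hij a from rfl] at h1
      have chain := h1.trans h2
      refine chain.mono (by ring_nf; omega)
    | false =>
      obtain ⟨A', _, hstep⟩ := stepNf (n + 1) (le_refl _) A i j hij hj (-a)
      refine ⟨A', ?_⟩
      have h1 := hA.mul_right ((FreeGroup.of (⟨(i, j, a), hij⟩ : ElIdx n F))⁻¹)
      have hinv := ((rel_inv i j hij a).mul_left (nfWord A))
      have h2 : relN (Rst n F) (stepC n) (nfWord A * gen i j hij (-a)) (nfWord A') := hstep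
      rw [show (FreeGroup.of (⟨(i, j, a), hij⟩ : ElIdx n F)) = gen i j hij a from rfl] at h1
      have chain := (h1.trans hinv).trans h2
      refine chain.mono (by ring_nf; omega)

theorem main_deriv [DecidableEq F] (w : FreeGroup (ElIdx n F)) (hw : stPi n F w = 1) :
    derivL (Rst n F) ((stepC n + 2) * FreeGroup.norm w + 2 * ((n + 1) * (n + 1))) w := by
  obtain ⟨A, hA⟩ := reduce_list w.toWord
  have hm : (w.toWord.map fun x => cond x.2 (FreeGroup.of x.1) (FreeGroup.of x.1)⁻¹).prod = w := by
    rw [← mk_eq_prod, FreeGroup.mk_toWord]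
  rw [hm] at hA
  have hpi : stPi n F (nfWord A) = 1 := by rw [← relN_pi hA, hw]
  have hzero := nf_entry_zero A hpi
  have h2 := nfWord_zero_rel A (fun i j hij => hzero i j hij)
  have chain := hA.trans h2
  have hnorm : w.toWord.length = FreeGroup.norm w := rfl
  rw [hnorm] at chain
  exact (chain.derivable).mono (by omega)

theorem derivL_toFin {G : Type*} [Group G] {R : Set G} {k : ℕ} {w : G} (h : derivL R k w) :
    ∃ l : ℕ, l ≤ k ∧ ∃ u r : Fin l → G,
      (∀ s : Fin l, r s ∈ R ∨ (r s)⁻¹ ∈ R) ∧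
      w = (List.ofFn fun s => (u s)⁻¹ * r s * u s).prod := by
  obtain ⟨L, h1, h2, rfl⟩ := h
  refine ⟨L.length, h1, fun s => (L.get s).1, fun s => (L.get s).2,
    fun s => h2 (L.get s) (List.get_mem L s), ?_⟩
  congr 1
  have := List.ofFn_getElem_eq_map L (fun p => p.1⁻¹ * p.2 * p.1)
  rw [← this]
  rfl

end StDeriv

/-- For `n ≥ 2`: (i) the Steinberg relations `R_St = (St1) ∪ (St2)` present
`Unip_{n+1}(F_q)` on the generators `S_el`, i.e. `ker π` is the normal closure of `R_St`; and
(ii) there is a constant `C` depending only on `n` (independent of the prime power `q`) such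
that every relation `w ∈ ker π` of length at most `m` is a product of at most `C·m`
conjugates of relators from `R_St` and their inverses. -/
theorem stmt13 (n : ℕ) (hn : 2 ≤ n) :
    ∃ C : ℕ,
      ∀ (q : ℕ), IsPrimePow q →
        ∀ (F : Type) [Field F] [Fintype F] [DecidableEq F], Fintype.card F = q →
          (MonoidHom.ker (stPi n F) = Subgroup.normalClosure (stR1 n F ∪ stR2 n F)) ∧
          ∀ (m : ℕ) (w : FreeGroup (ElIdx n F)), w ∈ MonoidHom.ker (stPi n F) →
            FreeGroup.norm w ≤ m →
            ∃ l : ℕ, l ≤ C * m ∧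
              ∃ (u r : Fin l → FreeGroup (ElIdx n F)),
                (∀ s : Fin l, r s ∈ stR1 n F ∪ stR2 n F ∨ (r s)⁻¹ ∈ stR1 n F ∪ stR2 n F) ∧
                w = (List.ofFn fun s => (u s)⁻¹ * r s * u s).prod := by
  classical
  refine ⟨StDeriv.stepC n + 2 + 2 * ((n + 1) * (n + 1)), ?_⟩
  intro q _ F _ _ _ _
  have hRst : StDeriv.Rst n F = stR1 n F ∪ stR2 n F := rfl
  constructor
  · apply le_antisymm
    · intro w hw
      have hker : stPi n F w = 1 := by simpa [MonoidHom.mem_ker] using hw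
      have hd := StDeriv.main_deriv w hker
      obtain ⟨L, _, h2, rfl⟩ := hd
      refine Subgroup.list_prod_mem _ fun x hx => ?_
      obtain ⟨p, hp, rfl⟩ := List.mem_map.1 hx
      have hr : p.2 ∈ Subgroup.normalClosure (stR1 n F ∪ stR2 n F) := by
        rcases h2 p hp with hh | hh
        · exact Subgroup.subset_normalClosure (hRst ▸ hh)
        · have h3 := Subgroup.subset_normalClosure (s := stR1 n F ∪ stR2 n F) (hRst ▸ hh)
          simpa using inv_mem h3
      have hnormal : (Subgroup.normalClosure (stR1 n F ∪ stR2 n F)).Normal :=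
        Subgroup.normalClosure_normal
      have hcon := hnormal.conj_mem p.2 hr p.1⁻¹
      simpa using hcon
    · have hsub : (stR1 n F ∪ stR2 n F) ⊆ (MonoidHom.ker (stPi n F) : Set (FreeGroup (ElIdx n F))) :=
        fun r hr => by
          simp only [SetLike.mem_coe, MonoidHom.mem_ker]
          exact StDeriv.relator_ker (hRst ▸ hr)
      exact Subgroup.normalClosure_le_normal hsub
  · intro m w hw hnorm
    by_cases hone : w = 1
    · refine ⟨0, by omega, Fin.elim0, Fin.elim0, fun s => s.elim0, ?_⟩
      subst hone
      simp
    · have hge : 1 ≤ FreeGroup.norm w := by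
        rcases Nat.eq_zero_or_pos (FreeGroup.norm w) with h0 | h
        · exact absurd (FreeGroup.norm_eq_zero.1 h0) hone
        · exact h
      have hker : stPi n F w = 1 := by simpa [MonoidHom.mem_ker] using hw
      have hd := StDeriv.main_deriv w hker
      have hle : (StDeriv.stepC n + 2) * FreeGroup.norm w + 2 * ((n + 1) * (n + 1)) ≤
          (StDeriv.stepC n + 2 + 2 * ((n + 1) * (n + 1))) * m := by
        have h1 : (StDeriv.stepC n + 2) * FreeGroup.norm w ≤ (StDeriv.stepC n + 2) * m :=
          Nat.mul_le_mul_left _ hnorm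
        have h2 : 2 * ((n + 1) * (n + 1)) ≤ 2 * ((n + 1) * (n + 1)) * m :=
          Nat.le_mul_of_pos_right _ (by omega)
        have e : (StDeriv.stepC n + 2 + 2 * ((n + 1) * (n + 1))) * m =
            (StDeriv.stepC n + 2) * m + 2 * ((n + 1) * (n + 1)) * m := by ring
        omega
      have hd2 := hd.mono hle
      obtain ⟨l, hl, u, r, hrr, he⟩ := StDeriv.derivL_toFin hd2
      exact ⟨l, hl, u, r, fun s => hRst ▸ hrr s, he⟩
end

section
/- Let q be a prime power and n ≥ 2. Let G be the subgroup of GL_{n+1}(F_q[t]) generated by { e_{i,i+1}(a+bt) : a, b ∈ F_q, 1 ≤ i ≤ n } (equivalently, G consists of all (n+1)×(n+1) matrices A over F_q[t] with A(i,i)=1, A(i,j)=0 for i>j, and A(i,j) a polynomial of degree at most j−i for i<j). For 0 ≤ i ≤ n−1 let K_i = ⟨ e_{j,j+1}(a+bt) : j ∈ {1,...,n}∖{i+1}, a,b ∈ F_q ⟩. Then every g ∈ G can be written as a product of at most 2 + 4(n+1) elements of ⋃_{i=0}^{n-1} K_i. -/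
open Polynomial

/-- The group `G ≤ GL_{n+1}(F[t])` generated by the elementary matrices
`e_{i,i+1}(a + bt)`, `a, b ∈ F`, `1 ≤ i ≤ n`. -/
noncomputable def polyG (n : ℕ) (F : Type) [Field F] :
    Subgroup (Matrix (Fin (n + 1)) (Fin (n + 1)) (Polynomial F))ˣ :=
  Subgroup.closure {M | ∃ (i : Fin n) (a b : F),
    (M : Matrix (Fin (n + 1)) (Fin (n + 1)) (Polynomial F)) =
      1 + Matrix.single i.castSucc i.succ (C a + C b * X)}

/-- For `0 ≤ i ≤ n-1`, the subgroup `K_i = ⟨e_{j,j+1}(a+bt) : j ∈ {1,…,n} \ {i+1}, a,b ∈ F⟩`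
(`1`-based; here `j : Fin n` is `0`-based, so the excluded index is `j = i`). -/
noncomputable def polyK (n : ℕ) (F : Type) [Field F] (i : Fin n) :
    Subgroup (Matrix (Fin (n + 1)) (Fin (n + 1)) (Polynomial F))ˣ :=
  Subgroup.closure {M | ∃ (j : Fin n) (a b : F), j ≠ i ∧
    (M : Matrix (Fin (n + 1)) (Fin (n + 1)) (Polynomial F)) =
      1 + Matrix.single j.castSucc j.succ (C a + C b * X)}


namespace Stmt15
open Matrix

variable {n : ℕ} {F : Type} [Field F]

abbrev Mat (n : ℕ) (F : Type) [Field F] := Matrix (Fin (n+1)) (Fin (n+1)) (Polynomial F)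

lemma E_mul_E_same (a b c : Fin (n+1)) (r s : Polynomial F) :
    Matrix.single a b r * Matrix.single b c s = Matrix.single a c (r * s) :=
  Matrix.single_mul_single_same _ _ _ _ _

lemma E_mul_E_ne {b c : Fin (n+1)} (h : b ≠ c) (a d : Fin (n+1)) (r s : Polynomial F) :
    Matrix.single a b r * Matrix.single c d s = 0 :=
  Matrix.single_mul_single_of_ne (h := h) _ _ _ _ _

lemma E_neg (a b : Fin (n+1)) (r : Polynomial F) :
    Matrix.single a b (-r) = -Matrix.single a b r := by
  have h := Matrix.single_add a b r (-r)
  rw [add_neg_cancel, Matrix.single_zero] at h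
  exact eq_neg_of_add_eq_zero_right h.symm

/-- elementary unit -/
noncomputable def eU (a b : Fin (n+1)) (h : a ≠ b) (r : Polynomial F) : (Mat n F)ˣ where
  val := 1 + Matrix.single a b r
  inv := 1 + Matrix.single a b (-r)
  val_inv := by
    rw [mul_add, add_mul, add_mul, one_mul, mul_one, E_mul_E_ne h.symm]
    rw [E_neg]
    simp only [one_mul]
    abel
  inv_val := by
    rw [mul_add, add_mul, add_mul, one_mul, mul_one, E_mul_E_ne h.symm]
    rw [E_neg]
    simp only [one_mul]
    abel

@[simp] lemma eU_val (a b : Fin (n+1)) (h : a ≠ b) (r : Polynomial F) :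
    (eU a b h r).val = 1 + Matrix.single a b r := rfl

@[simp] lemma eU_inv (a b : Fin (n+1)) (h : a ≠ b) (r : Polynomial F) :
    (eU a b h r)⁻¹ = eU a b h (-r) := by
  apply Units.ext; rfl

lemma eU_mul (a b : Fin (n+1)) (h : a ≠ b) (r s : Polynomial F) :
    eU a b h r * eU a b h s = eU a b h (r + s) := by
  apply Units.ext
  show (1 + Matrix.single a b r) * (1 + Matrix.single a b s) = _
  rw [mul_add, add_mul, add_mul, one_mul, mul_one, E_mul_E_ne h.symm,
    eU_val, Matrix.single_add, one_mul]
  abel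

@[simp] lemma eU_zero (a b : Fin (n+1)) (h : a ≠ b) :
    eU a b h (0 : Polynomial F) = 1 := by
  apply Units.ext; simp [eU]

lemma eU_comm (a k b : Fin (n+1)) (hak : a ≠ k) (hkb : k ≠ b) (hab : a ≠ b)
    (s t : Polynomial F) :
    eU a k hak s * eU k b hkb t * (eU a k hak s)⁻¹ * (eU k b hkb t)⁻¹ =
      eU a b hab (s * t) := by
  apply Units.ext
  show ((1 + Matrix.single a k s) * (1 + Matrix.single k b t)) *
      (1 + Matrix.single a k (-s)) * (1 + Matrix.single k b (-t)) =
      1 + Matrix.single a b (s * t)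
  rw [E_neg, E_neg]
  set A := Matrix.single a k s with hA
  set B := Matrix.single k b t with hB
  have hAB : A * B = Matrix.single a b (s * t) := E_mul_E_same _ _ _ _ _
  have hAA : A * A = 0 := E_mul_E_ne hak.symm _ _ _ _
  have hBB : B * B = 0 := E_mul_E_ne hkb.symm _ _ _ _
  have hBA : B * A = 0 := E_mul_E_ne hab.symm _ _ _ _
  have hCA : Matrix.single a b (s * t) * A = 0 := E_mul_E_ne hab.symm _ _ _ _
  have hCB : Matrix.single a b (s * t) * B = 0 := E_mul_E_ne hkb.symm _ _ _ _
  have hAC : A * Matrix.single a b (s * t) = 0 := E_mul_E_ne hak.symm _ _ _ _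
  have hBC : B * Matrix.single a b (s * t) = 0 := E_mul_E_ne hab.symm _ _ _ _
  noncomm_ring
  simp only [hAB, hAA, hBB, hBA, hCA, hCB, hAC, hBC, mul_zero, zero_mul, add_zero, zero_add,
    neg_zero, mul_neg, neg_neg, mul_assoc]
  abel

/-- consecutive elementary is a generator of `polyK i` when allowed -/
lemma eU_adj_mem (i : Fin n) (a b : Fin (n+1)) (hne : a ≠ b) (hab : (a:ℕ) + 1 = (b:ℕ))
    (hi : (i:ℕ) ≠ (a:ℕ)) (r : Polynomial F) (hr : degree r ≤ 1) :
    eU a b hne r ∈ polyK n F i := by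
  apply Subgroup.subset_closure
  have ha : (a:ℕ) < n := by have := b.isLt; omega
  refine ⟨⟨(a:ℕ), ha⟩, r.coeff 0, r.coeff 1, ?_, ?_⟩
  · intro hj; apply hi; rw [← hj]
  · have h1 : (⟨(a:ℕ), ha⟩ : Fin n).castSucc = a := by
      apply Fin.ext; simp
    have h2 : (⟨(a:ℕ), ha⟩ : Fin n).succ = b := by
      apply Fin.ext; simp [hab]
    have hr' : r = C (r.coeff 0) + C (r.coeff 1) * X := by
      conv_lhs => rw [eq_X_add_C_of_degree_le_one hr]
      ring
    rw [eU_val, h1, h2]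
    conv_lhs => rw [hr']

/-- elementary with monomial entry is in `polyK i` when the interval avoids `i` -/
lemma eU_mono_mem (i : Fin n) :
    ∀ (m : ℕ) (a b : Fin (n+1)) (hne : a ≠ b), (a:ℕ) + m = (b:ℕ) →
      ¬(((a:ℕ) ≤ (i:ℕ)) ∧ ((i:ℕ) < (b:ℕ))) →
      ∀ (c : F) (d : ℕ), d ≤ m → eU a b hne (C c * X ^ d) ∈ polyK n F i := by
  intro m
  induction m with
  | zero =>
    intro a b hne hab _ _ _ _
    exact absurd (Fin.ext (by omega)) hne
  | succ m ih =>
    intro a b hne hab hblk c d hd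
    have hanb : (a:ℕ) < (b:ℕ) := by omega
    have hia : (i:ℕ) ≠ (a:ℕ) := by
      intro h; exact hblk ⟨by omega, by omega⟩
    rcases Nat.eq_zero_or_pos m with rfl | hm
    · -- adjacent case
      apply eU_adj_mem i a b hne (by omega) hia
      calc degree (C c * X ^ d) ≤ degree (C c) + degree (X ^ d : Polynomial F) := degree_mul_le _ _
        _ ≤ 0 + d := add_le_add degree_C_le (degree_X_pow_le d)
        _ ≤ 1 := by
            rw [zero_add]
            exact_mod_cast Nat.cast_le.mpr hd
    · -- split through k = a+1
      have hkn : (a:ℕ) + 1 < n + 1 := by have := b.isLt; omega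
      set k : Fin (n+1) := ⟨(a:ℕ)+1, hkn⟩ with hk
      have hak : a ≠ k := by intro h; have := congrArg Fin.val h; simp [hk] at this
      have hkb : k ≠ b := by
        intro h; have := congrArg Fin.val h; simp [hk] at this; omega
      set e₁ := min d 1 with he₁
      set e₂ := d - e₁ with he₂
      have hsplit : C c * X ^ d = (C c * X ^ e₁) * (C (1:F) * X ^ e₂) := by
        rw [Polynomial.C_1, one_mul, mul_assoc, ← pow_add]
        congr 2
        omega
      rw [hsplit, ← eU_comm a k b hak hkb hne]
      have h1 : eU a k hak (C c * X ^ e₁) ∈ polyK n F i := by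
        apply eU_adj_mem i a k hak (by simp [hk]) hia
        calc degree (C c * X ^ e₁) ≤ degree (C c) + degree (X ^ e₁ : Polynomial F) :=
              degree_mul_le _ _
          _ ≤ 0 + e₁ := add_le_add degree_C_le (degree_X_pow_le e₁)
          _ ≤ 1 := by
              rw [zero_add]
              exact_mod_cast Nat.cast_le.mpr (by omega : e₁ ≤ 1)
      have h2 : eU k b hkb (C (1:F) * X ^ e₂) ∈ polyK n F i := by
        apply ih k b hkb (by simp [hk]; omega)
        · rintro ⟨h3, h4⟩; exact hblk ⟨by simp [hk] at h3; omega, by omega⟩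
        · omega
      exact mul_mem (mul_mem (mul_mem h1 h2) (inv_mem h1)) (inv_mem h2)

/-- general elementary in `polyK i` -/
lemma eU_mem (i : Fin n) (a b : Fin (n+1)) (hne : a ≠ b) (hab : (a:ℕ) < (b:ℕ))
    (hblk : ¬(((a:ℕ) ≤ (i:ℕ)) ∧ ((i:ℕ) < (b:ℕ)))) (r : Polynomial F)
    (hr : degree r ≤ ((b:ℕ) - (a:ℕ) : ℕ)) : eU a b hne r ∈ polyK n F i := by
  suffices h : ∀ N : ℕ, N ≤ (b:ℕ) - (a:ℕ) + 1 → ∀ r : Polynomial F, degree r < N →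
      eU a b hne r ∈ polyK n F i by
    apply h ((b:ℕ) - (a:ℕ) + 1) le_rfl r
    calc degree r ≤ (((b:ℕ) - (a:ℕ) : ℕ) : WithBot ℕ) := hr
      _ < (((b:ℕ) - (a:ℕ) + 1 : ℕ) : WithBot ℕ) := by exact_mod_cast lt_add_one _
  intro N
  induction N with
  | zero =>
    intro _ r hr
    have : r = 0 := by
      by_contra h
      rw [degree_eq_natDegree h] at hr
      exact absurd hr (by exact_mod_cast not_lt.mpr (Nat.zero_le _))
    rw [this, eU_zero]
    exact one_mem _
  | succ N ihN =>
    intro hN r hr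
    have h1 : r = (r - C (r.coeff N) * X ^ N) + C (r.coeff N) * X ^ N := by ring
    rw [h1, ← eU_mul]
    apply mul_mem
    · apply ihN (by omega)
      rw [degree_lt_iff_coeff_zero]
      intro m hm
      have hm' : (N : ℕ) ≤ m := by exact_mod_cast hm
      rw [coeff_sub, coeff_C_mul, coeff_X_pow]
      rcases Nat.lt_or_ge N m with h | h
      · rw [if_neg (by omega), mul_zero, sub_zero]
        apply coeff_eq_zero_of_degree_lt
        calc degree r < ((N+1 : ℕ) : WithBot ℕ) := by exact_mod_cast hr
          _ ≤ (m : WithBot ℕ) := by exact_mod_cast (by omega : N + 1 ≤ m)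
      · have : m = N := by omega
        rw [this, if_pos rfl, mul_one, sub_self]
    · exact eU_mono_mem i ((b:ℕ) - (a:ℕ)) a b hne (by omega) hblk _ N (by omega)

lemma wb_le {a b : ℕ} (h : a ≤ b) : (a : WithBot ℕ) ≤ (b : WithBot ℕ) := by exact_mod_cast h
lemma wb_lt {a b : ℕ} (h : a < b) : (a : WithBot ℕ) < (b : WithBot ℕ) := by exact_mod_cast h

def IsUT (M : Mat n F) : Prop :=
  (∀ p q : Fin (n+1), (q:ℕ) ≤ (p:ℕ) → M p q = if p = q then 1 else 0) ∧
  (∀ p q : Fin (n+1), degree (M p q) ≤ (((q:ℕ) - (p:ℕ) : ℕ) : WithBot ℕ))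

lemma isUT_one : IsUT (1 : Mat n F) := by
  constructor
  · intro p q _; rw [Matrix.one_apply]
  · intro p q
    rw [Matrix.one_apply]
    split
    · rename_i h; subst h; simp
    · simp

lemma isUT_mul {M N : Mat n F} (hM : IsUT M) (hN : IsUT N) : IsUT (M * N) := by
  constructor
  · intro p q hqp
    rw [Matrix.mul_apply]
    rw [Finset.sum_eq_single_of_mem p (Finset.mem_univ p)]
    · rw [hM.1 p p le_rfl, if_pos rfl, one_mul, hN.1 p q hqp]
    · intro k _ hk
      rcases le_or_gt (k:ℕ) (p:ℕ) with h | h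
      · rw [hM.1 p k h, if_neg (fun h' => hk h'.symm), zero_mul]
      · rw [hN.1 k q (by omega), if_neg (fun h' => by subst h'; omega), mul_zero]
  · intro p q
    rw [Matrix.mul_apply]
    refine le_trans (degree_sum_le _ _) (Finset.sup_le fun k _ => ?_)
    rcases Nat.lt_or_ge (k:ℕ) (p:ℕ) with h | h
    · rw [hM.1 p k (by omega) , if_neg (fun h' => by subst h'; omega), zero_mul]
      simp
    · rcases Nat.lt_or_ge (q:ℕ) (k:ℕ) with h2 | h2
      · rw [hN.1 k q (by omega), if_neg (fun h' => by subst h'; omega), mul_zero]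
        simp
      · refine le_trans (degree_mul_le _ _) ?_
        refine le_trans (add_le_add (hM.2 p k) (hN.2 k q)) ?_
        rw [← Nat.cast_add]
        exact wb_le (by omega)

lemma isUT_gen (j : Fin n) (a b : F) :
    IsUT ((1 : Mat n F) + Matrix.single j.castSucc j.succ (C a + C b * X)) := by
  have hcs : ((j.castSucc : Fin (n+1)) : ℕ) = (j : ℕ) := rfl
  have hsc : ((j.succ : Fin (n+1)) : ℕ) = (j : ℕ) + 1 := rfl
  constructor
  · intro p q hqp
    rw [Matrix.add_apply, Matrix.single_apply_of_ne
      (h := fun h' => by obtain ⟨rfl, rfl⟩ := h'; rw [hcs, hsc] at hqp; omega),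
      add_zero, Matrix.one_apply]
  · intro p q
    rw [Matrix.add_apply]
    by_cases h : p = j.castSucc ∧ q = j.succ
    · obtain ⟨rfl, rfl⟩ := h
      have hqp1 : ((j.succ : Fin (n+1)) : ℕ) - ((j.castSucc : Fin (n+1)) : ℕ) = 1 := by
        rw [hsc, hcs]; omega
      rw [Matrix.one_apply, if_neg (fun h' => by have := congrArg Fin.val h'; omega),
        Matrix.single_apply_same, zero_add, hqp1]
      refine le_trans (degree_add_le _ _) (max_le ?_ ?_)
      · exact le_trans degree_C_le (by norm_num)
      · refine le_trans (degree_mul_le _ _) ?_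
        refine le_trans (add_le_add degree_C_le degree_X_le) ?_
        rw [zero_add]
        norm_num
    · rw [Matrix.single_apply_of_ne (h := fun h' => h ⟨h'.1.symm, h'.2.symm⟩), add_zero, Matrix.one_apply]
      split
      · rename_i h'; subst h'; simp
      · simp

/-- the set of IsUT matrices-as-subtype is finite -/
lemma isUT_finite [Fintype F] : Finite {M : Mat n F // IsUT M} := by
  have e := Polynomial.degreeLTEquiv F (n+1)
  have : Finite (Polynomial.degreeLT F (n+1)) := Finite.of_equiv _ e.toEquiv.symm
  apply Finite.of_injective
    (fun M => (fun p q => (⟨M.1 p q, by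
      rw [Polynomial.mem_degreeLT]
      refine lt_of_le_of_lt (M.2.2 p q) ?_
      exact wb_lt (by have := p.2; have := q.2; omega)⟩ :
        Polynomial.degreeLT F (n+1))) :
      {M : Mat n F // IsUT M} → (Fin (n+1) → Fin (n+1) → Polynomial.degreeLT F (n+1)))
  intro M N h
  apply Subtype.ext
  funext p q
  exact congrArg Subtype.val (congrFun (congrFun h p) q)

lemma isUT_inv [Fintype F] (u : (Mat n F)ˣ) (h : IsUT u.val) :
    IsUT ((u⁻¹ : (Mat n F)ˣ) : Mat n F) := by
  have hp : ∀ k : ℕ, IsUT ((u ^ k : (Mat n F)ˣ) : Mat n F) := by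
    intro k
    induction k with
    | zero => simpa using isUT_one
    | succ k ih => rw [pow_succ]; exact isUT_mul ih h
  have : Finite {M : Mat n F // IsUT M} := isUT_finite
  obtain ⟨k, l, hkl, heq⟩ := Finite.exists_ne_map_eq_of_infinite
    (fun k : ℕ => (⟨((u ^ k : (Mat n F)ˣ) : Mat n F), hp k⟩ : {M : Mat n F // IsUT M}))
  have hukl : u ^ k = u ^ l := Units.ext (congrArg Subtype.val heq)
  -- wlog k < l
  rcases Nat.lt_or_ge k l with hlt | hge
  case _ =>
    have h1 : u ^ (l - k) = 1 := by
      have : u ^ k * u ^ (l - k) = u ^ k * 1 := by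
        rw [mul_one, ← pow_add]
        rw [hukl]; congr 1; omega
      exact mul_left_cancel this
    have h2 : u⁻¹ = u ^ (l - k - 1) := by
      apply mul_left_cancel (a := u)
      rw [mul_inv_cancel, ← pow_succ']
      rw [← h1]; congr 1; omega
    rw [h2]; exact hp _
  case _ =>
    have hlt : l < k := by omega
    have h1 : u ^ (k - l) = 1 := by
      have : u ^ l * u ^ (k - l) = u ^ l * 1 := by
        rw [mul_one, ← pow_add]
        rw [← hukl]; congr 1; omega
      exact mul_left_cancel this
    have h2 : u⁻¹ = u ^ (k - l - 1) := by
      apply mul_left_cancel (a := u)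
      rw [mul_inv_cancel, ← pow_succ']
      rw [← h1]; congr 1; omega
    rw [h2]; exact hp _

lemma isUT_of_mem_polyG [Fintype F] (g : (Mat n F)ˣ) (hg : g ∈ polyG n F) :
    IsUT (g : Mat n F) := by
  induction hg using Subgroup.closure_induction with
  | mem x hx => obtain ⟨j, a, b, hx⟩ := hx; rw [hx]; exact isUT_gen j a b
  | one => exact isUT_one
  | mul x y hx hy ihx ihy => exact isUT_mul ihx ihy
  | inv x hx ihx => exact isUT_inv x ihx

/-- block condition at split i -/
def Blk (i : Fin n) (M : Mat n F) : Prop :=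
  ∀ p q : Fin (n+1), (p:ℕ) ≤ (i:ℕ) → (i:ℕ) < (q:ℕ) → M p q = 0

lemma blk_mem (i : Fin n) (s : Finset (Fin (n+1) × Fin (n+1))) :
    ∀ (u : (Mat n F)ˣ), IsUT u.val → Blk i u.val →
      (∀ p q, p ≠ q → u.val p q ≠ 0 → (p, q) ∈ s) → u ∈ polyK n F i := by
  induction s using Finset.strongInduction with
  | _ s ih =>
  intro u hUT hB hsupp
  classical
  by_cases hz : ∀ p q : Fin (n+1), p ≠ q → u.val p q = 0
  · have : u = 1 := by
      apply Units.ext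
      show u.val = 1
      apply Matrix.ext
      intro p q
      by_cases hpq : p = q
      · subst hpq; rw [hUT.1 p p le_rfl, if_pos rfl, Matrix.one_apply_eq]
      · rw [hz p q hpq, Matrix.one_apply_ne hpq]
    rw [this]; exact one_mem _
  · push_neg at hz
    obtain ⟨p₀, q₀, hpq₀, hne₀⟩ := hz
    set T : Finset (Fin (n+1) × Fin (n+1)) :=
      Finset.univ.filter (fun pq => u.val pq.1 pq.2 ≠ 0 ∧ pq.1 ≠ pq.2) with hT
    have hTne : T.Nonempty := ⟨(p₀, q₀), by simp [hT, hne₀, hpq₀]⟩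
    have hTim : (T.image Prod.snd).Nonempty := hTne.image _
    obtain ⟨ab, habT, hab'⟩ := Finset.mem_image.mp ((T.image Prod.snd).max'_mem hTim)
    obtain ⟨a, b⟩ := ab
    simp only at hab'
    rw [hT, Finset.mem_filter] at habT
    obtain ⟨-, hr0, hneab⟩ := habT
    simp only at hr0 hneab
    set r := u.val a b with hrdef
    have hmax : ∀ p q : Fin (n+1), p ≠ q → u.val p q ≠ 0 → (q:ℕ) ≤ (b:ℕ) := by
      intro p q hne h0
      have hmem : q ∈ T.image Prod.snd := Finset.mem_image.mpr ⟨(p,q), by simp [hT, h0, hne], rfl⟩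
      have := Finset.le_max' _ _ hmem
      rw [← hab'] at this
      exact_mod_cast this
    have hab : (a:ℕ) < (b:ℕ) := by
      rcases le_or_gt (b:ℕ) (a:ℕ) with h | h
      · exfalso; apply hr0; rw [hrdef, hUT.1 a b h, if_neg hneab]
      · exact h
    -- row b of u.val is the standard basis row
    have hrow : ∀ q : Fin (n+1), u.val b q = if b = q then 1 else 0 := by
      intro q
      by_cases hq : b = q
      · subst hq; rw [hUT.1 b b le_rfl]
      · rw [if_neg hq]
        rcases le_or_gt (q:ℕ) (b:ℕ) with h | h
        · rw [hUT.1 b q h, if_neg hq]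
        · by_contra h0
          have := hmax b q hq h0
          omega
    have hEmul : Matrix.single a b (-r) * u.val = Matrix.single a b (-r) := by
      apply Matrix.ext
      intro p q
      by_cases hp : p = a
      · subst hp
        rw [Matrix.single_mul_apply_same, hrow]
        by_cases hq : b = q
        · subst hq; rw [if_pos rfl, mul_one, Matrix.single_apply_same]
        · rw [if_neg hq, mul_zero,
            Matrix.single_apply_of_ne (h := fun h' => hq h'.2)]

      · rw [Matrix.single_mul_apply_of_ne (h := hp),
          Matrix.single_apply_of_ne (h := fun h' => hp h'.1.symm)]
    set u' := (eU a b hneab r)⁻¹ * u with hu'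
    have hu'val : u'.val = u.val - Matrix.single a b r := by
      rw [hu', eU_inv, Units.val_mul, eU_val, add_mul, one_mul, hEmul, E_neg]
      abel
    have hu'entry : ∀ p q : Fin (n+1), u'.val p q =
        u.val p q - Matrix.single a b r p q := by
      intro p q; rw [hu'val]; rfl
    have hu'UT : IsUT u'.val := by
      constructor
      · intro p q hqp
        rw [hu'entry, Matrix.single_apply_of_ne
          (h := fun h' => by obtain ⟨rfl, rfl⟩ := h'; omega), sub_zero]
        exact hUT.1 p q hqp
      · intro p q
        by_cases hpq : p = a ∧ q = b
        · obtain ⟨rfl, rfl⟩ := hpq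
          rw [hu'entry, Matrix.single_apply_same, sub_self]
          simp
        · rw [hu'entry, Matrix.single_apply_of_ne
            (h := fun h' => hpq ⟨h'.1.symm, h'.2.symm⟩), sub_zero]
          exact hUT.2 p q
    have hblk' : ¬(((a:ℕ) ≤ (i:ℕ)) ∧ ((i:ℕ) < (b:ℕ))) := by
      rintro ⟨h1, h2⟩
      exact hr0 (hB a b h1 h2)
    have hu'B : Blk i u'.val := by
      intro p q h1 h2
      rw [hu'entry, hB p q h1 h2, Matrix.single_apply_of_ne
        (h := fun h' => by obtain ⟨rfl, rfl⟩ := h'; exact hblk' ⟨h1, h2⟩), sub_zero]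
    have hmem' : u' ∈ polyK n F i := by
      apply ih (s.erase (a, b)) (Finset.erase_ssubset (hsupp a b hneab hr0)) u' hu'UT hu'B
      intro p q hne h0
      have hne_ab : ¬(p = a ∧ q = b) := by
        rintro ⟨rfl, rfl⟩
        apply h0
        rw [hu'entry, Matrix.single_apply_same, sub_self]
      have hu0 : u.val p q ≠ 0 := by
        intro h'
        apply h0
        rw [hu'entry, h', Matrix.single_apply_of_ne
          (h := fun h' => hne_ab ⟨h'.1.symm, h'.2.symm⟩), sub_zero]
      rw [Finset.mem_erase]
      refine ⟨?_, hsupp p q hne hu0⟩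
      intro h'
      exact hne_ab ⟨congrArg Prod.fst h', congrArg Prod.snd h'⟩
    have : u = eU a b hneab r * u' := by rw [hu']; rw [mul_inv_cancel_left]
    rw [this]
    exact mul_mem (eU_mem i a b hneab hab hblk' r (hUT.2 a b)) hmem'

/-- column elementary (or 1 if on the diagonal) -/
noncomputable def eUcol (lastI : Fin (n+1)) (c : Fin (n+1) → Polynomial F)
    (x : Fin (n+1)) : (Mat n F)ˣ :=
  if hx : x = lastI then 1 else eU x lastI hx (c x)

lemma col_prod_val (lastI : Fin (n+1)) (c : Fin (n+1) → Polynomial F) :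
    ∀ l : List (Fin (n+1)), (∀ x ∈ l, x ≠ lastI) → l.Nodup →
      ∀ p q : Fin (n+1), ((l.map (eUcol lastI c)).prod).val p q =
        (if p = q then 1 else 0) + (if q = lastI ∧ p ∈ l then c p else 0) := by
  intro l
  induction l with
  | nil =>
    intro _ _ p q
    simp [Matrix.one_apply]
  | cons a l ih =>
    intro hne hnd p q
    have ha : a ≠ lastI := hne a (by simp)
    have hlast_notmem : lastI ∉ l := fun h => (hne lastI (by simp [h])) rfl
    have hal : a ∉ l := (List.nodup_cons.mp hnd).1
    rw [List.map_cons, List.prod_cons, Units.val_mul]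
    have hcol : eUcol lastI c a = eU a lastI ha (c a) := dif_neg ha
    rw [hcol, eU_val, Matrix.add_mul, Matrix.one_mul, Matrix.add_apply]
    have ihl := ih (fun x hx => hne x (by simp [hx])) (List.nodup_cons.mp hnd).2
    by_cases hp : p = a
    · subst hp
      rw [Matrix.single_mul_apply_same, ihl, ihl]
      by_cases hq : q = lastI
      · subst hq
        simp [ha, hal, hlast_notmem]
      · simp [hq, Ne.symm hq]
    · rw [Matrix.single_mul_apply_of_ne (h := hp), ihl, add_zero]
      congr 1
      by_cases hq : q = lastI ∧ p ∈ l
      · rw [if_pos hq, if_pos ⟨hq.1, by simp [hq.2]⟩]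
      · rw [if_neg hq, if_neg (fun h : q = lastI ∧ p ∈ a :: l => by
          rcases List.mem_cons.mp h.2 with h' | h'
          · exact hp h'
          · exact hq ⟨h.1, h'⟩)]

/-- decomposition of the top-right corner elementary into ≤ 4N factors from the Kᵢ -/
lemma corner_decomp (hn : 2 ≤ n) (h0L : (0 : Fin (n+1)) ≠ Fin.last n) :
    ∀ N : ℕ, N ≤ n + 1 → ∀ r : Polynomial F, degree r < N →
      ∃ gs : List (Mat n F)ˣ, gs.length ≤ 4 * N ∧
        (∀ x ∈ gs, ∃ i : Fin n, x ∈ polyK n F i) ∧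
        gs.prod = eU 0 (Fin.last n) h0L r := by
  intro N
  induction N with
  | zero =>
    intro _ r hr
    have : r = 0 := by
      by_contra h
      rw [degree_eq_natDegree h] at hr
      exact absurd hr (by exact_mod_cast not_lt.mpr (Nat.zero_le _))
    exact ⟨[], by simp, by simp, by rw [List.prod_nil, this, eU_zero]⟩
  | succ N ihN =>
    intro hN r hr
    set r' := r - C (r.coeff N) * X ^ N with hr'def
    have hr' : degree r' < N := by
      rw [degree_lt_iff_coeff_zero]
      intro m hm
      have hm' : (N : ℕ) ≤ m := by exact_mod_cast hm
      rw [hr'def, coeff_sub, coeff_C_mul, coeff_X_pow]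
      rcases Nat.lt_or_ge N m with h | h
      · rw [if_neg (by omega), mul_zero, sub_zero]
        apply coeff_eq_zero_of_degree_lt
        calc degree r < ((N+1 : ℕ) : WithBot ℕ) := by exact_mod_cast hr
          _ ≤ (m : WithBot ℕ) := by exact_mod_cast (by omega : N + 1 ≤ m)
      · have : m = N := by omega
        rw [this, if_pos rfl, mul_one, sub_self]
    obtain ⟨gs', hlen', hmem', hprod'⟩ := ihN (by omega) r' hr'
    -- indices
    have h1n : (1 : ℕ) < n + 1 := by omega
    set one : Fin (n+1) := ⟨1, h1n⟩ with hone
    have h01 : (0 : Fin (n+1)) ≠ one := by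
      intro h; have := congrArg Fin.val h; simp [hone] at this
    have h1L : one ≠ Fin.last n := by
      intro h; have := congrArg Fin.val h; simp [hone, Fin.last] at this; omega
    set e₁ := min N 1 with he₁
    set s : Polynomial F := C (r.coeff N) * X ^ e₁ with hs
    set t : Polynomial F := C (1 : F) * X ^ (N - e₁) with ht
    have hst : s * t = C (r.coeff N) * X ^ N := by
      rw [hs, ht, Polynomial.C_1, one_mul, mul_assoc, ← pow_add]
      congr 2
      omega
    set A := eU (0 : Fin (n+1)) one h01 s with hA
    set B := eU one (Fin.last n) h1L t with hB
    have hAmem : A ∈ polyK n F ⟨1, by omega⟩ := by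
      apply eU_adj_mem _ _ _ _ (by simp [hone]) (by simp [hone])
      rw [hs]
      calc degree (C (r.coeff N) * X ^ e₁) ≤ degree (C (r.coeff N)) +
            degree (X ^ e₁ : Polynomial F) := degree_mul_le _ _
        _ ≤ 0 + e₁ := add_le_add degree_C_le (degree_X_pow_le e₁)
        _ ≤ 1 := by rw [zero_add]; exact_mod_cast (by omega : e₁ ≤ 1)
    have hBmem : B ∈ polyK n F ⟨0, by omega⟩ := by
      apply eU_mem _ _ _ _ (by simp [hone, Fin.last]; omega) (by simp [hone])
      rw [ht, Polynomial.C_1, one_mul]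
      refine le_trans (degree_X_pow_le _) ?_
      have : ((Fin.last n : Fin (n+1)) : ℕ) - ((one : Fin (n+1)) : ℕ) = n - 1 := by
        simp [hone, Fin.last]
      rw [this]
      exact_mod_cast (by omega : N - e₁ ≤ n - 1)
    refine ⟨A :: B :: A⁻¹ :: B⁻¹ :: gs', by simp; omega, ?_, ?_⟩
    · intro x hx
      simp only [List.mem_cons] at hx
      rcases hx with hx | hx | hx | hx | hx
      · exact ⟨⟨1, by omega⟩, hx ▸ hAmem⟩
      · exact ⟨⟨0, by omega⟩, hx ▸ hBmem⟩
      · exact ⟨⟨1, by omega⟩, hx ▸ inv_mem hAmem⟩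
      · exact ⟨⟨0, by omega⟩, hx ▸ inv_mem hBmem⟩
      · exact hmem' x hx
    · rw [List.prod_cons, List.prod_cons, List.prod_cons, List.prod_cons, hprod']
      have : A * (B * (A⁻¹ * (B⁻¹ * eU 0 (Fin.last n) h0L r'))) =
          (A * B * A⁻¹ * B⁻¹) * eU 0 (Fin.last n) h0L r' := by
        simp [mul_assoc]
      rw [this, eU_comm 0 one (Fin.last n) h01 h1L h0L s t, hst, eU_mul]
      congr 1
      rw [hr'def]
      ring

end Stmt15

open Stmt15 in
/-- For every prime power `q` and `n ≥ 2`, every element of the group `G`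
of unipotent matrices with polynomial entries is a product of at most `2 + 4(n+1)` elements
of `⋃_{i=0}^{n-1} K_i`. -/
theorem stmt15 (n : ℕ) (hn : 2 ≤ n) (q : ℕ) (hq : IsPrimePow q)
    (F : Type) [Field F] [Fintype F] (hF : Fintype.card F = q) :
    ∀ g ∈ polyG n F, ∃ gs : List (Matrix (Fin (n + 1)) (Fin (n + 1)) (Polynomial F))ˣ,
      gs.length ≤ 2 + 4 * (n + 1) ∧
      (∀ x ∈ gs, ∃ i : Fin n, x ∈ polyK n F i) ∧
      gs.prod = g := by
  intro g hg
  classical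
  have hUT : IsUT (g : Mat n F) := isUT_of_mem_polyG g hg
  set L : Fin (n+1) := Fin.last n with hL
  have hLval : (L : ℕ) = n := rfl
  have h0val : ((0 : Fin (n+1)) : ℕ) = 0 := rfl
  have h0L : (0 : Fin (n+1)) ≠ L := by
    intro h; have := congrArg Fin.val h; rw [h0val, hLval] at this; omega
  set c : Fin (n+1) → Polynomial F := fun x => (g : Mat n F) x L with hc
  set mlist : List (Fin (n+1)) :=
    (List.finRange (n+1)).filter (fun x => decide (x ≠ L ∧ x ≠ 0)) with hmlist
  set l : List (Fin (n+1)) := 0 :: mlist with hl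
  have hmem_mlist : ∀ x : Fin (n+1), x ∈ mlist ↔ (x ≠ L ∧ x ≠ 0) := by
    intro x
    rw [hmlist, List.mem_filter]
    simp [List.mem_finRange]
  have hmem_l : ∀ x : Fin (n+1), x ∈ l ↔ x ≠ L := by
    intro x
    rw [hl, List.mem_cons, hmem_mlist]
    constructor
    · rintro (rfl | ⟨h, _⟩)
      · exact h0L
      · exact h
    · intro h
      by_cases hx : x = 0
      · exact Or.inl hx
      · exact Or.inr ⟨h, hx⟩
  have hlne : ∀ x ∈ l, x ≠ L := fun x hx => (hmem_l x).mp hx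
  have hnd : l.Nodup := by
    rw [hl]
    refine List.nodup_cons.mpr ⟨fun h => ?_, (List.nodup_finRange _).filter _⟩
    exact ((hmem_mlist 0).mp h).2 rfl
  set V : (Mat n F)ˣ := ((l.map (eUcol L c)).prod) with hV
  have hVval : ∀ p q : Fin (n+1), V.val p q =
      (if p = q then 1 else 0) + (if q = L ∧ p ∈ l then c p else 0) :=
    col_prod_val L c l hlne hnd
  set M' : Mat n F := Matrix.of (fun p q => if q = L ∧ p ≠ L then 0 else (g : Mat n F) p q)
    with hM'
  have hM'app : ∀ p q : Fin (n+1), M' p q =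
      if q = L ∧ p ≠ L then 0 else (g : Mat n F) p q := fun p q => rfl
  have hgdiag : (g : Mat n F) L L = 1 := by
    rw [hUT.1 L L le_rfl, if_pos rfl]
  have hM'row : ∀ q : Fin (n+1), M' L q = if L = q then 1 else 0 := by
    intro q
    rw [hM'app]
    by_cases hq : L = q
    · subst hq; rw [if_neg (fun h => h.2 rfl), hgdiag, if_pos rfl]
    · rw [if_neg (fun h => hq h.1.symm), if_neg hq, hUT.1 L q ?_]
      · rw [if_neg hq]
      · have := q.isLt; rw [hLval]; omega
  have hVM : V.val * M' = (g : Mat n F) := by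
    apply Matrix.ext
    intro p q
    rw [Matrix.mul_apply]
    have hterm : ∀ k : Fin (n+1), V.val p k * M' k q =
        (if p = k then 1 else 0) * M' k q + (if k = L ∧ p ∈ l then c p else 0) * M' k q := by
      intro k; rw [hVval p k, add_mul]
    rw [Finset.sum_congr rfl fun k _ => hterm k, Finset.sum_add_distrib]
    have h1 : (∑ k : Fin (n+1), (if p = k then 1 else 0) * M' k q) = M' p q := by
      rw [Finset.sum_eq_single p (fun k _ hk => by rw [if_neg (fun h => hk h.symm), zero_mul])
        (fun h => absurd (Finset.mem_univ p) h), if_pos rfl, one_mul]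
    have h2 : (∑ k : Fin (n+1), (if k = L ∧ p ∈ l then c p else 0) * M' k q) =
        (if p ∈ l then c p else 0) * M' L q := by
      rw [Finset.sum_eq_single L (fun k _ hk => by rw [if_neg (fun h => hk h.1), zero_mul])
        (fun h => absurd (Finset.mem_univ L) h)]
      by_cases hpl : p ∈ l
      · rw [if_pos ⟨rfl, hpl⟩, if_pos hpl]
      · rw [if_neg (fun h => hpl h.2), if_neg hpl]
    rw [h1, h2, hM'row]
    by_cases hq : q = L
    · subst hq
      by_cases hp : p = L
      · subst hp
        rw [hM'app, if_neg (fun h => h.2 rfl), if_neg (fun h => ((hmem_l L).mp h) rfl),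
          zero_mul, add_zero]
      · rw [hM'app, if_pos ⟨rfl, hp⟩, if_pos ((hmem_l p).mpr hp), if_pos rfl, mul_one,
          zero_add, hc]
    · rw [if_neg (fun h : L = q => hq h.symm), mul_zero, add_zero, hM'app,
        if_neg (fun h => hq h.1)]
  set u' : (Mat n F)ˣ := V⁻¹ * g with hu'
  have hu'val : (u' : Mat n F) = M' := by
    rw [hu', Units.val_mul, ← hVM, ← mul_assoc, ← Units.val_mul, inv_mul_cancel,
      Units.val_one, one_mul]
  have hiL : n - 1 < n := by omega
  have hu'mem : u' ∈ polyK n F ⟨n - 1, hiL⟩ := by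
    apply blk_mem ⟨n - 1, hiL⟩ Finset.univ u'
    · rw [hu'val]
      constructor
      · intro p q hqp
        rw [hM'app, if_neg ?_]
        · exact hUT.1 p q hqp
        · rintro ⟨rfl, hp⟩
          exact hp (Fin.ext (by have := p.isLt; rw [hLval]; omega))
      · intro p q
        rw [hM'app]
        split
        · simp
        · exact hUT.2 p q
    · rw [hu'val]
      intro p q hp hq
      rw [hM'app, if_pos ?_]
      have hqL : q = L := Fin.ext (by have := q.isLt; rw [hLval]; simp at hp hq ⊢; omega)
      refine ⟨hqL, fun hpL => ?_⟩
      rw [hpL, hLval] at hp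
      simp at hp hq
      omega
    · intro p q _ _; exact Finset.mem_univ _
  set w : (Mat n F)ˣ := ((mlist.map (eUcol L c)).prod) with hw
  have h0n : 0 < n := by omega
  have hwmem : w ∈ polyK n F ⟨0, h0n⟩ := by
    apply Subgroup.list_prod_mem
    intro x hx
    rw [List.mem_map] at hx
    obtain ⟨y, hy, rfl⟩ := hx
    obtain ⟨hyL, hy0⟩ := (hmem_mlist y).mp hy
    rw [eUcol, dif_neg hyL]
    apply eU_mem _ _ _ _ ?_ ?_ _ ?_
    · have := y.isLt
      rw [hLval]
      rcases Nat.lt_or_ge (y : ℕ) n with h | h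
      · exact h
      · exact absurd (Fin.ext (by rw [hLval]; omega)) hyL
    · rintro ⟨h1, _⟩
      have h0i : ((⟨0, h0n⟩ : Fin n) : ℕ) = 0 := rfl
      rw [h0i] at h1
      have : (y:ℕ) = 0 := by omega
      exact hy0 (Fin.ext (by rw [h0val]; omega))
    · exact hUT.2 y L
  have hdeg0 : degree (c 0) < ((n + 1 : ℕ) : WithBot ℕ) :=
    calc degree (c 0) ≤ ((((L : Fin (n+1)):ℕ) - ((0 : Fin (n+1)):ℕ) : ℕ) : WithBot ℕ) := hUT.2 0 L
      _ < ((n+1 : ℕ) : WithBot ℕ) := by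
          exact_mod_cast (by rw [hLval, h0val]; omega : ((L : Fin (n+1)):ℕ) - ((0 : Fin (n+1)):ℕ) < n + 1)
  obtain ⟨gs0, hlen0, hmem0, hprod0⟩ := corner_decomp hn h0L (n+1) le_rfl (c 0) hdeg0
  refine ⟨gs0 ++ [w, u'], ?_, ?_, ?_⟩
  · rw [List.length_append]
    simp only [List.length_cons, List.length_nil]
    omega
  · intro x hx
    rw [List.mem_append] at hx
    rcases hx with hx | hx
    · exact hmem0 x hx
    · simp only [List.mem_cons, List.not_mem_nil, or_false] at hx
      rcases hx with rfl | rfl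
      · exact ⟨⟨0, h0n⟩, hwmem⟩
      · exact ⟨⟨n - 1, hiL⟩, hu'mem⟩
  · rw [List.prod_append, hprod0, List.prod_cons, List.prod_cons, List.prod_nil, mul_one]
    have hVfact : V = eU 0 L h0L (c 0) * w := by
      rw [hV, hl, List.map_cons, List.prod_cons, hw]
      congr 1
      rw [eUcol, dif_neg h0L]
    rw [← mul_assoc, ← hVfact, hu', mul_inv_cancel_left]
end
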